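/- arXiv:1411.4503 — 7 statements merged into one kernel-verified Lean document; each statement's English description precedes it below -/
import Mathlib

section
/- Let x_1,…,x_n ∈ ℝ^d, let x̄ = (1/n)·Σ_{i=1}^n x_i, and let γ > 0. Then z = (z_1,…,z_n) = (0,…,0) is a global minimizer of the function (z_1,…,z_n) ↦ Σ_{i=1}^n [ (1/2)·‖x_i − x̄ − z_i‖² + γ·‖z_i‖ ] over (ℝ^d)^n if and only if γ ≥ γ* := max_{1≤i≤n} ‖x_i − x̄‖. -/
lemma key_term_ineq {E : Type*} [NormedAddCommGroup E] [InnerProductSpace ℝ E]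
    (a z : E) (γ : ℝ) (h : ‖a‖ ≤ γ) :
    (1 / 2 : ℝ) * ‖a‖ ^ 2 ≤ (1 / 2) * ‖a - z‖ ^ 2 + γ * ‖z‖ := by
  have h1 : ‖a - z‖ ^ 2 = ‖a‖ ^ 2 - 2 * inner ℝ a z + ‖z‖ ^ 2 := norm_sub_sq_real a z
  have h2 : inner ℝ a z ≤ ‖a‖ * ‖z‖ := real_inner_le_norm a z
  have h3 : (0 : ℝ) ≤ ‖z‖ := norm_nonneg z
  nlinarith [sq_nonneg ‖z‖]

/-- `z = 0` is a global minimizer of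
`z ↦ Σᵢ [ (1/2)‖xᵢ - x̄ - zᵢ‖² + γ‖zᵢ‖ ]` if and only if
`γ ≥ γ* = maxᵢ ‖xᵢ - x̄‖`, the critical value at which the first outlier
is detected. -/
theorem zero_minimizer_iff_gamma_ge_gammaStar
    (d n : ℕ) (hn : 0 < n)
    (x : Fin n → EuclideanSpace ℝ (Fin d))
    (xbar : EuclideanSpace ℝ (Fin d))
    (hxbar : xbar = (n : ℝ)⁻¹ • ∑ i : Fin n, x i)
    (γ : ℝ) (hγ : 0 < γ)
    (F : (Fin n → EuclideanSpace ℝ (Fin d)) → ℝ)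
    (hF : ∀ z, F z = ∑ i : Fin n, ((1 / 2) * ‖x i - xbar - z i‖ ^ 2 + γ * ‖z i‖))
    (γstar : ℝ)
    (hγstar : γstar = Finset.univ.sup'
      (Finset.univ_nonempty_iff.mpr ⟨⟨0, hn⟩⟩) (fun i : Fin n => ‖x i - xbar‖)) :
    (∀ z, F 0 ≤ F z) ↔ γstar ≤ γ := by
  constructor
  · intro hmin
    rw [hγstar]
    apply Finset.sup'_le
    intro i _
    by_contra hlt
    push_neg at hlt
    set a : EuclideanSpace ℝ (Fin d) := x i - xbar with ha
    have hapos : 0 < ‖a‖ := lt_trans hγ hlt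
    set t : ℝ := min 1 ((‖a‖ - γ) / ‖a‖) with htdef
    have ht0 : 0 < t := lt_min one_pos (div_pos (by linarith) hapos)
    have ht1 : t ≤ 1 := min_le_left _ _
    have htle : t * ‖a‖ ≤ ‖a‖ - γ := by
      have := min_le_right 1 ((‖a‖ - γ) / ‖a‖)
      calc t * ‖a‖ ≤ ((‖a‖ - γ) / ‖a‖) * ‖a‖ := by
            exact mul_le_mul_of_nonneg_right this hapos.le
        _ = ‖a‖ - γ := div_mul_cancel₀ _ hapos.ne'
    set z : Fin n → EuclideanSpace ℝ (Fin d) :=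
      Function.update (0 : Fin n → EuclideanSpace ℝ (Fin d)) i (t • a) with hz
    have h := hmin z
    have hdiff : F z - F 0 =
        ((1 / 2) * ‖a - t • a‖ ^ 2 + γ * ‖t • a‖) - ((1 / 2) * ‖a‖ ^ 2 + γ * ‖(0 : EuclideanSpace ℝ (Fin d))‖) := by
      rw [hF, hF, ← Finset.sum_sub_distrib]
      rw [Finset.sum_eq_single i]
      · simp [hz, Function.update_self, ha]
      · intro k _ hk
        simp [hz, Function.update_of_ne hk]
      · simp
    have hineq : (1 / 2 : ℝ) * ‖a‖ ^ 2 ≤ (1 / 2) * ‖a - t • a‖ ^ 2 + γ * ‖t • a‖ := by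
      have := sub_nonneg.mpr h
      rw [hdiff] at this
      simp only [norm_zero, mul_zero, add_zero] at this
      linarith
    have hn1 : a - t • a = (1 - t) • a := by rw [sub_smul, one_smul]
    have hn2 : ‖a - t • a‖ = (1 - t) * ‖a‖ := by
      rw [hn1, norm_smul, Real.norm_eq_abs, abs_of_nonneg (by linarith)]
    have hn3 : ‖t • a‖ = t * ‖a‖ := by
      rw [norm_smul, Real.norm_eq_abs, abs_of_nonneg ht0.le]
    rw [hn2, hn3] at hineq
    nlinarith [mul_pos ht0 hapos]
  · intro hge z
    rw [hF, hF]
    apply Finset.sum_le_sum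
    intro i _
    have hi : ‖x i - xbar‖ ≤ γ := by
      refine le_trans ?_ (hγstar ▸ hge)
      exact Finset.le_sup' (fun j : Fin n => ‖x j - xbar‖) (Finset.mem_univ i)
    simp only [Pi.zero_apply, norm_zero, sub_zero, mul_zero, add_zero]
    exact key_term_ineq _ _ _ hi
end

section
/- Let x̄_1, x̄_2 ∈ ℝ^d, let n1, n2 ≥ 1 be integers with n = n1 + n2, let w > 0 and λ > 0, and define h(μ_1, μ_2) = (n1/2)·‖x̄_1 − μ_1‖² + (n2/2)·‖x̄_2 − μ_2‖² + λ·w·‖μ_2 − μ_1‖ for μ_1, μ_2 ∈ ℝ^d. Then the point μ_1 = μ_2 = μ̄ := (n1·x̄_1 + n2·x̄_2)/n is a global minimizer of h if and only if λ·w ≥ (n1·n2/n)·‖x̄_2 − x̄_1‖. -/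
/-- For the two-segment objective
`h(μ₁, μ₂) = (n₁/2)‖x̄₁ - μ₁‖² + (n₂/2)‖x̄₂ - μ₂‖² + λ·w·‖μ₂ - μ₁‖`,
the single-segment point `μ₁ = μ₂ = μ̄ = (n₁x̄₁ + n₂x̄₂)/n` is a global
minimizer if and only if `λ·w ≥ (n₁n₂/n)·‖x̄₂ - x̄₁‖`. -/
theorem single_segment_minimizer_iff
    (d : ℕ) (xbar1 xbar2 : EuclideanSpace ℝ (Fin d))
    (n1 n2 n : ℕ) (hn1 : 1 ≤ n1) (hn2 : 1 ≤ n2) (hn : n = n1 + n2)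
    (w lam : ℝ) (hw : 0 < w) (hlam : 0 < lam)
    (h : EuclideanSpace ℝ (Fin d) → EuclideanSpace ℝ (Fin d) → ℝ)
    (hh : ∀ μ1 μ2, h μ1 μ2 = ((n1 : ℝ) / 2) * ‖xbar1 - μ1‖ ^ 2
      + ((n2 : ℝ) / 2) * ‖xbar2 - μ2‖ ^ 2 + lam * w * ‖μ2 - μ1‖)
    (mubar : EuclideanSpace ℝ (Fin d))
    (hmubar : mubar = (n : ℝ)⁻¹ • ((n1 : ℝ) • xbar1 + (n2 : ℝ) • xbar2)) :
    (∀ μ1 μ2, h mubar mubar ≤ h μ1 μ2) ↔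
      ((n1 : ℝ) * (n2 : ℝ) / (n : ℝ)) * ‖xbar2 - xbar1‖ ≤ lam * w := by
  have hN1 : (0:ℝ) < (n1:ℝ) := by exact_mod_cast hn1
  have hN2 : (0:ℝ) < (n2:ℝ) := by exact_mod_cast hn2
  have hNc : (n:ℝ) = (n1:ℝ) + (n2:ℝ) := by rw [hn]; push_cast; ring
  have hN : (0:ℝ) < (n:ℝ) := by rw [hNc]; positivity
  set c : ℝ := (n1:ℝ) * (n2:ℝ) / (n:ℝ) with hcdef
  set L : ℝ := lam * w with hLdef
  have hL : 0 < L := by positivity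
  have hc : 0 < c := by rw [hcdef]; positivity
  set v : EuclideanSpace ℝ (Fin d) := xbar2 - xbar1 with hv
  have ha : xbar1 - mubar = ((n2:ℝ)/(n:ℝ)) • (-v) := by
    rw [hv, hmubar, hNc]
    match_scalars <;> field_simp <;> ring
  have hb : xbar2 - mubar = ((n1:ℝ)/(n:ℝ)) • v := by
    rw [hv, hmubar, hNc]
    match_scalars <;> field_simp <;> ring
  have key : ∀ μ1 μ2, h μ1 μ2 = c/2 * ‖v‖^2 + (n1:ℝ)/2 * ‖μ1 - mubar‖^2
      + (n2:ℝ)/2 * ‖μ2 - mubar‖^2 + L * ‖μ2 - μ1‖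
      - c * (inner ℝ v (μ2 - μ1) : ℝ) := by
    intro μ1 μ2
    rw [hh]
    have e1 : xbar1 - μ1 = (xbar1 - mubar) - (μ1 - mubar) := by abel
    have e2 : xbar2 - μ2 = (xbar2 - mubar) - (μ2 - mubar) := by abel
    have e3 : μ2 - μ1 = (μ2 - mubar) - (μ1 - mubar) := by abel
    rw [e1, e2, ha, hb]
    rw [norm_sub_sq_real (((n2:ℝ)/(n:ℝ)) • -v) (μ1 - mubar)]
    rw [norm_sub_sq_real (((n1:ℝ)/(n:ℝ)) • v) (μ2 - mubar)]
    rw [e3, inner_sub_right v (μ2 - mubar) (μ1 - mubar)]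
    rw [norm_smul, norm_smul, norm_neg]
    rw [real_inner_smul_left, real_inner_smul_left, inner_neg_left]
    have hab : ‖(n2:ℝ)/(n:ℝ)‖ = (n2:ℝ)/(n:ℝ) := Real.norm_of_nonneg (by positivity)
    have hab2 : ‖(n1:ℝ)/(n:ℝ)‖ = (n1:ℝ)/(n:ℝ) := Real.norm_of_nonneg (by positivity)
    rw [hab, hab2, hcdef, hNc]
    have hne : (n1:ℝ) + (n2:ℝ) ≠ 0 := by positivity
    field_simp
    ring
  have hmm : h mubar mubar = c/2 * ‖v‖^2 := by
    rw [key mubar mubar]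
    simp
  constructor
  · intro hmin
    have step : ∀ t : ℝ, 0 < t → c * ‖v‖^2 ≤ c/2 * t * ‖v‖^2 + L * ‖v‖ := by
      intro t ht
      set p1 : EuclideanSpace ℝ (Fin d) := mubar - (t * (n2:ℝ)/(n:ℝ)) • v with hp1
      set p2 : EuclideanSpace ℝ (Fin d) := mubar + (t * (n1:ℝ)/(n:ℝ)) • v with hp2
      have d1 : p1 - mubar = -((t * (n2:ℝ)/(n:ℝ)) • v) := by rw [hp1]; abel
      have d2 : p2 - mubar = (t * (n1:ℝ)/(n:ℝ)) • v := by rw [hp2]; abel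
      have d3 : p2 - p1 = t • v := by
        rw [hp1, hp2, hNc]
        match_scalars <;> field_simp <;> ring
      have hmin' := hmin p1 p2
      rw [hmm, key p1 p2, d1, d2, d3, norm_neg, norm_smul, norm_smul,
        norm_smul, real_inner_smul_right, real_inner_self_eq_norm_sq] at hmin'
      have a1 : ‖t * (n2:ℝ)/(n:ℝ)‖ = t * (n2:ℝ)/(n:ℝ) := Real.norm_of_nonneg (by positivity)
      have a2 : ‖t * (n1:ℝ)/(n:ℝ)‖ = t * (n1:ℝ)/(n:ℝ) := Real.norm_of_nonneg (by positivity)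
      have a3 : ‖t‖ = t := Real.norm_of_nonneg ht.le
      rw [a1, a2, a3] at hmin'
      have quad : (n1:ℝ)/2 * ((t * (n2:ℝ)/(n:ℝ)) * ‖v‖)^2
          + (n2:ℝ)/2 * ((t * (n1:ℝ)/(n:ℝ)) * ‖v‖)^2 = c/2 * t^2 * ‖v‖^2 := by
        rw [hcdef, hNc]
        have hne : (n1:ℝ) + (n2:ℝ) ≠ 0 := by positivity
        field_simp
        ring
      have h5 : c * t * ‖v‖^2 ≤ c/2 * t^2 * ‖v‖^2 + L * (t * ‖v‖) := by
        linarith [quad, hmin']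
      have h6 : t * (c * ‖v‖^2) ≤ t * (c/2 * t * ‖v‖^2 + L * ‖v‖) := by
        linarith [h5]
      exact le_of_mul_le_mul_left h6 ht
    have hvn : (0:ℝ) ≤ ‖v‖ := norm_nonneg v
    rcases eq_or_lt_of_le hvn with hv0 | hv0
    · rw [← hv0]; simpa using hL.le
    · have h0 : c * ‖v‖^2 - L * ‖v‖ ≤ 0 := by
        by_contra hpos
        push_neg at hpos
        have hK : (0:ℝ) < c * ‖v‖^2 := by positivity
        have ht0 : (0:ℝ) < (c * ‖v‖^2 - L * ‖v‖) / (c * ‖v‖^2) := div_pos hpos hK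
        have hstep := step _ ht0
        have e : c/2 * ((c * ‖v‖^2 - L * ‖v‖) / (c * ‖v‖^2)) * ‖v‖^2
            = (c * ‖v‖^2 - L * ‖v‖)/2 := by
          field_simp
        rw [e] at hstep
        linarith [hstep, hpos]
      have h0' : (c * ‖v‖) * ‖v‖ ≤ L * ‖v‖ := by
        have : c * ‖v‖^2 ≤ L * ‖v‖ := by linarith [h0]
        linarith [this, sq_abs ‖v‖]
      exact le_of_mul_le_mul_right h0' hv0
  · intro hge μ1 μ2
    rw [hmm, key μ1 μ2]
    have cs : (inner ℝ v (μ2 - μ1) : ℝ) ≤ ‖v‖ * ‖μ2 - μ1‖ := real_inner_le_norm v (μ2 - μ1)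
    have h1 : c * (inner ℝ v (μ2 - μ1) : ℝ) ≤ c * (‖v‖ * ‖μ2 - μ1‖) :=
      mul_le_mul_of_nonneg_left cs hc.le
    have h2 : (c * ‖v‖) * ‖μ2 - μ1‖ ≤ L * ‖μ2 - μ1‖ :=
      mul_le_mul_of_nonneg_right hge (norm_nonneg _)
    have h2' : c * (‖v‖ * ‖μ2 - μ1‖) ≤ L * ‖μ2 - μ1‖ := by
      rw [← mul_assoc]; exact h2
    have h3 : (0:ℝ) ≤ (n1:ℝ)/2 * ‖μ1 - mubar‖^2 := by positivity
    have h4 : (0:ℝ) ≤ (n2:ℝ)/2 * ‖μ2 - mubar‖^2 := by positivity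
    linarith [h1, h2', h3, h4]
end

section
/- Let x_1,…,x_n ∈ ℝ^d with n ≥ 2. For a split point 1 ≤ k ≤ n−1, set x̄_1(k) = (1/k)·Σ_{i=1}^{k} x_i, x̄_2(k) = (1/(n−k))·Σ_{i=k+1}^{n} x_i, SSE(k) = Σ_{i=1}^{k} ‖x_i − x̄_1(k)‖² + Σ_{i=k+1}^{n} ‖x_i − x̄_2(k)‖², and G(k) = √(k·(n−k))·‖x̄_2(k) − x̄_1(k)‖. Then a split point k* ∈ {1,…,n−1} maximizes G over {1,…,n−1} if and only if k* minimizes SSE over {1,…,n−1}. (Equivalently: with the weights w_k = √(k(n−k)), the split found by maximizing the relaxed criterion g(k) = (k(n−k)/(n·w_k))·‖x̄_2(k) − x̄_1(k)‖ coincides with the split solving the ℓ0-constrained two-segment least-squares problem.) -/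
open Finset

local notation "⟪" a ", " b "⟫" => @inner ℝ _ _ a b

lemma seg_sum {d : ℕ} (x : ℕ → EuclideanSpace ℝ (Fin d)) (s : Finset ℕ)
    (m : EuclideanSpace ℝ (Fin d)) :
    ∑ i ∈ s, ‖x i - m‖ ^ 2 =
      ∑ i ∈ s, ‖x i‖ ^ 2 - 2 * ⟪∑ i ∈ s, x i, m⟫ + s.card * ‖m‖ ^ 2 := by
  simp_rw [norm_sub_sq_real]
  rw [Finset.sum_add_distrib, Finset.sum_sub_distrib, ← Finset.mul_sum,
    ← sum_inner, Finset.sum_const, nsmul_eq_mul]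

/-- With weights `wₖ = √(k(n-k))`, a split point maximizes the relaxed
criterion `G(k) = √(k(n-k))·‖x̄₂(k) - x̄₁(k)‖` over `{1,…,n-1}` if and only
if it minimizes the two-segment sum of squared errors `SSE(k)`. -/
theorem weighted_split_eq_l0_split
    (d n : ℕ) (hn : 2 ≤ n)
    (x : ℕ → EuclideanSpace ℝ (Fin d))
    (xbar1 xbar2 : ℕ → EuclideanSpace ℝ (Fin d))
    (hxbar1 : ∀ k, xbar1 k = (k : ℝ)⁻¹ • ∑ i ∈ Finset.Icc 1 k, x i)
    (hxbar2 : ∀ k, xbar2 k = ((n - k : ℕ) : ℝ)⁻¹ • ∑ i ∈ Finset.Icc (k + 1) n, x i)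
    (SSE G : ℕ → ℝ)
    (hSSE : ∀ k, SSE k = (∑ i ∈ Finset.Icc 1 k, ‖x i - xbar1 k‖ ^ 2)
      + ∑ i ∈ Finset.Icc (k + 1) n, ‖x i - xbar2 k‖ ^ 2)
    (hG : ∀ k, G k = Real.sqrt ((k : ℝ) * ((n - k : ℕ) : ℝ)) * ‖xbar2 k - xbar1 k‖)
    (kstar : ℕ) (hkstar : kstar ∈ Finset.Icc 1 (n - 1)) :
    (∀ k ∈ Finset.Icc 1 (n - 1), G k ≤ G kstar) ↔
      (∀ k ∈ Finset.Icc 1 (n - 1), SSE kstar ≤ SSE k) := by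
  have hGnn : ∀ k, 0 ≤ G k := fun k => by
    rw [hG k]; exact mul_nonneg (Real.sqrt_nonneg _) (norm_nonneg _)
  set C : ℝ := ∑ i ∈ Finset.Icc 1 n, ‖x i‖ ^ 2
      - ‖∑ i ∈ Finset.Icc 1 n, x i‖ ^ 2 / n with hC
  have key : ∀ k ∈ Finset.Icc 1 (n - 1), SSE k = C - (G k) ^ 2 / n := by
    intro k hk
    rw [Finset.mem_Icc] at hk
    obtain ⟨hk1, hk2⟩ := hk
    have hkn : k < n := lt_of_le_of_lt hk2 (Nat.sub_lt (by omega) one_pos)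
    set a := ∑ i ∈ Finset.Icc 1 k, x i with ha
    set b := ∑ i ∈ Finset.Icc (k + 1) n, x i with hb
    set p : ℝ := (k : ℝ) with hp
    set q : ℝ := ((n - k : ℕ) : ℝ) with hq
    have hp0 : 0 < p := by rw [hp]; exact_mod_cast Nat.pos_of_ne_zero (by omega)
    have hq0 : 0 < q := by
      rw [hq]; exact_mod_cast Nat.sub_pos_of_lt hkn
    have hpq : p + q = (n : ℝ) := by
      rw [hp, hq, Nat.cast_sub hkn.le]; ring
    have hn0 : (0 : ℝ) < n := by positivity
    have hsum : a + b = ∑ i ∈ Finset.Icc 1 n, x i := by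
      rw [ha, hb, show Finset.Icc 1 k = Finset.Ioc 0 k from rfl,
        Finset.Icc_add_one_left_eq_Ioc k n,
        show Finset.Icc 1 n = Finset.Ioc 0 n from rfl]
      exact Finset.sum_Ioc_consecutive _ (Nat.zero_le k) hkn.le
    have hTsum : (∑ i ∈ Finset.Icc 1 k, ‖x i‖ ^ 2)
        + ∑ i ∈ Finset.Icc (k + 1) n, ‖x i‖ ^ 2
        = ∑ i ∈ Finset.Icc 1 n, ‖x i‖ ^ 2 := by
      rw [show Finset.Icc 1 k = Finset.Ioc 0 k from rfl,
        Finset.Icc_add_one_left_eq_Ioc k n,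
        show Finset.Icc 1 n = Finset.Ioc 0 n from rfl]
      exact Finset.sum_Ioc_consecutive _ (Nat.zero_le k) hkn.le
    have hcard1 : ((Finset.Icc 1 k).card : ℝ) = p := by
      have : (Finset.Icc 1 k).card = k := by rw [Nat.card_Icc]; omega
      rw [this, hp]
    have hcard2 : ((Finset.Icc (k + 1) n).card : ℝ) = q := by
      have : (Finset.Icc (k + 1) n).card = n - k := by rw [Nat.card_Icc]; omega
      rw [this, hq]
    have hia : ⟪a, (p⁻¹ : ℝ) • a⟫ = p⁻¹ * ‖a‖ ^ 2 := by
      rw [real_inner_smul_right, real_inner_self_eq_norm_sq]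
    have hib : ⟪b, (q⁻¹ : ℝ) • b⟫ = q⁻¹ * ‖b‖ ^ 2 := by
      rw [real_inner_smul_right, real_inner_self_eq_norm_sq]
    have hna : ‖(p⁻¹ : ℝ) • a‖ ^ 2 = p⁻¹ ^ 2 * ‖a‖ ^ 2 := by
      rw [norm_smul, mul_pow, Real.norm_eq_abs, sq_abs]
    have hnb : ‖(q⁻¹ : ℝ) • b‖ ^ 2 = q⁻¹ ^ 2 * ‖b‖ ^ 2 := by
      rw [norm_smul, mul_pow, Real.norm_eq_abs, sq_abs]
    have h1 : ∑ i ∈ Finset.Icc 1 k, ‖x i - xbar1 k‖ ^ 2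
        = (∑ i ∈ Finset.Icc 1 k, ‖x i‖ ^ 2) - ‖a‖ ^ 2 / p := by
      rw [hxbar1 k, seg_sum, ← ha, hcard1, hia, hna]
      field_simp
      ring
    have h2 : ∑ i ∈ Finset.Icc (k + 1) n, ‖x i - xbar2 k‖ ^ 2
        = (∑ i ∈ Finset.Icc (k + 1) n, ‖x i‖ ^ 2) - ‖b‖ ^ 2 / q := by
      rw [hxbar2 k, seg_sum, ← hb, hcard2, hib, hnb]
      field_simp
      ring
    have hdiff : ‖xbar2 k - xbar1 k‖ ^ 2
        = q⁻¹ ^ 2 * ‖b‖ ^ 2 - 2 * (q⁻¹ * p⁻¹ * ⟪a, b⟫) + p⁻¹ ^ 2 * ‖a‖ ^ 2 := by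
      rw [hxbar1 k, hxbar2 k, ← ha, ← hb, norm_sub_sq_real, hna, hnb,
        real_inner_smul_left, real_inner_smul_right, real_inner_comm b a]
      ring
    have hGsq : G k ^ 2 = p * q * ‖xbar2 k - xbar1 k‖ ^ 2 := by
      rw [hG k, mul_pow, Real.sq_sqrt (by positivity)]
    have habn : ‖a + b‖ ^ 2 = ‖a‖ ^ 2 + 2 * ⟪a, b⟫ + ‖b‖ ^ 2 := norm_add_sq_real a b
    rw [hSSE k, h1, h2, hGsq, hdiff, hC, ← hTsum, ← hsum, habn, ← hpq]
    field_simp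
    ring
  have hn0 : (0 : ℝ) < n := by positivity
  constructor
  · intro h k hk
    rw [key k hk, key kstar hkstar]
    have h1 := h k hk
    have h2 := hGnn k
    have h3 := hGnn kstar
    have h4 : G k ^ 2 ≤ G kstar ^ 2 := by nlinarith
    have h5 : G k ^ 2 / n ≤ G kstar ^ 2 / n := by gcongr
    linarith
  · intro h k hk
    have h1 := h k hk
    rw [key k hk, key kstar hkstar] at h1
    have h2 := hGnn k
    have h3 := hGnn kstar
    have hinv : (0 : ℝ) < (n : ℝ)⁻¹ := by positivity
    have h4 : G k ^ 2 / n ≤ G kstar ^ 2 / n := by linarith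
    rw [div_eq_mul_inv, div_eq_mul_inv] at h4
    have h5 : G k ^ 2 ≤ G kstar ^ 2 := le_of_mul_le_mul_right (by linarith) hinv
    nlinarith
end

section
/- Let (Ω, F, P) be a probability space and X_1,…,X_n independent real-valued random variables with |X_i| ≤ M/2 almost surely for some M > 0, E[X_i] = μ1 for 1 ≤ i ≤ n1 and E[X_i] = μ2 for n1 < i ≤ n, where n1, n2 ≥ 1, n = n1 + n2, and Δμ := μ2 − μ1 > 0. Then for every integer m with 1 ≤ m ≤ n2 − 1, P(W_m^− < 0) ≤ exp( −2·n1²·m·Δμ² / (M²·n·(n−m)) ). -/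
open Real

/-- Core inequality of Hoeffding's lemma. -/
lemma hoeffding_key (p x : ℝ) (hp0 : 0 ≤ p) (hp1 : p ≤ 1) :
    (1 - p) * exp (-(p * x)) + p * exp ((1 - p) * x) ≤ exp (x ^ 2 / 8) := by
  rcases eq_or_lt_of_le hp0 with h0 | h0
  · simp [← h0]
    positivity
  rcases eq_or_lt_of_le hp1 with h1 | h1
  · simp [h1]
    positivity
  -- now 0 < p < 1
  set q : ℝ := 1 - p with hq
  have hqpos : 0 < q := by simp [hq]; linarith
  set D : ℝ → ℝ := fun y => q * exp (-(p * y)) + p * exp (q * y) with hD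
  set D' : ℝ → ℝ := fun y => p * q * (exp (q * y) - exp (-(p * y))) with hD'
  set D'' : ℝ → ℝ := fun y => p * q * (q * exp (q * y) + p * exp (-(p * y))) with hD''
  have hDpos : ∀ y, 0 < D y := fun y => by positivity
  have hDd : ∀ y, HasDerivAt D (D' y) y := by
    intro y
    have e1 : HasDerivAt (fun y : ℝ => exp (-(p * y))) (exp (-(p * y)) * (-p)) y := by
      simpa using (((hasDerivAt_id y).const_mul p).neg).exp
    have e2 : HasDerivAt (fun y : ℝ => exp (q * y)) (exp (q * y) * q) y := by
      simpa using ((hasDerivAt_id y).const_mul q).exp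
    have := (e1.const_mul q).add (e2.const_mul p)
    refine this.congr_deriv ?_
    simp only [hD']; ring
  have hDd' : ∀ y, HasDerivAt D' (D'' y) y := by
    intro y
    have e1 : HasDerivAt (fun y : ℝ => exp (-(p * y))) (exp (-(p * y)) * (-p)) y := by
      simpa using (((hasDerivAt_id y).const_mul p).neg).exp
    have e2 : HasDerivAt (fun y : ℝ => exp (q * y)) (exp (q * y) * q) y := by
      simpa using ((hasDerivAt_id y).const_mul q).exp
    have := (e2.sub e1).const_mul (p * q)
    refine this.congr_deriv ?_
    simp only [hD'']; ring
  set G : ℝ → ℝ := fun y => y / 4 - D' y / D y with hG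
  have hGd : ∀ y, HasDerivAt G (1 / 4 - (D'' y * D y - D' y * D' y) / (D y) ^ 2) y := by
    intro y
    exact ((hasDerivAt_id y).div_const 4).sub (((hDd' y).div (hDd y)) (hDpos y).ne')
  have hGderiv_nonneg : ∀ y, 0 ≤ 1 / 4 - (D'' y * D y - D' y * D' y) / (D y) ^ 2 := by
    intro y
    rw [sub_nonneg, div_le_iff₀ (by positivity)]
    have key : D'' y * D y - D' y * D' y = p * q * (exp (-(p * y)) * exp (q * y)) := by
      simp only [hD, hD', hD'']; ring
    rw [key]
    nlinarith [sq_nonneg (q * exp (-(p * y)) - p * exp (q * y)), exp_pos (-(p * y)),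
      exp_pos (q * y), hDpos y]
  have hGmono : Monotone G := by
    apply monotone_of_deriv_nonneg
    · exact fun y => (hGd y).differentiableAt
    · intro y
      rw [(hGd y).deriv]
      exact hGderiv_nonneg y
  have hG0 : G 0 = 0 := by simp [hG, hD', hD]
  set g : ℝ → ℝ := fun y => y ^ 2 / 8 - Real.log (D y) with hg
  have hgd : ∀ y, HasDerivAt g (G y) y := by
    intro y
    have h1 : HasDerivAt (fun y : ℝ => y ^ 2 / 8) (y / 4) y := by
      have := ((hasDerivAt_pow 2 y).div_const 8)
      refine this.congr_deriv ?_; ring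
    have h2 : HasDerivAt (fun y => Real.log (D y)) (D' y / D y) y :=
      (hDd y).log (hDpos y).ne'
    exact h1.sub h2
  have hgdiff : Differentiable ℝ g := fun y => (hgd y).differentiableAt
  have hD0 : D 0 = 1 := by simp [hD, hq]
  have hg0 : g 0 = 0 := by simp [hg, hD0]
  have hgnonneg : ∀ y, 0 ≤ g y := by
    intro y
    rcases le_total 0 y with hy | hy
    · have hmono : MonotoneOn g (Set.Ici 0) := by
        apply monotoneOn_of_deriv_nonneg (convex_Ici 0) hgdiff.continuous.continuousOn
          (hgdiff.differentiableOn)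
        intro z hz
        rw [interior_Ici] at hz
        rw [(hgd z).deriv]
        have := hGmono (le_of_lt hz : (0:ℝ) ≤ z)
        rw [hG0] at this
        exact this
      have := hmono (Set.self_mem_Ici) (Set.mem_Ici.2 hy) hy
      rwa [hg0] at this
    · have hanti : AntitoneOn g (Set.Iic 0) := by
        apply antitoneOn_of_deriv_nonpos (convex_Iic 0) hgdiff.continuous.continuousOn
          (hgdiff.differentiableOn)
        intro z hz
        rw [interior_Iic] at hz
        rw [(hgd z).deriv]
        have := hGmono (le_of_lt hz : z ≤ (0:ℝ))
        rw [hG0] at this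
        exact this
      have := hanti (Set.mem_Iic.2 hy) (Set.self_mem_Iic) hy
      rwa [hg0] at this
  have := hgnonneg x
  have hlog : Real.log (D x) ≤ x ^ 2 / 8 := by simp only [hg] at this; linarith
  calc D x = exp (Real.log (D x)) := (exp_log (hDpos x)).symm
    _ ≤ exp (x ^ 2 / 8) := exp_le_exp.2 hlog

open MeasureTheory in
lemma integrable_of_abs_le_aux {Ω : Type*} [MeasurableSpace Ω] (P : Measure Ω)
    [IsProbabilityMeasure P] (f : Ω → ℝ) (hf : Measurable f) (C : ℝ)
    (h : ∀ᵐ ω ∂P, |f ω| ≤ C) : Integrable f P := by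
  refine Integrable.mono' (integrable_const C) hf.aestronglyMeasurable ?_
  filter_upwards [h] with ω hω
  simpa [Real.norm_eq_abs] using hω

open MeasureTheory in
/-- Hoeffding's lemma. -/
lemma hoeffding_mgf_aux {Ω : Type*} [MeasurableSpace Ω] (P : Measure Ω)
    [IsProbabilityMeasure P] (X : Ω → ℝ) (hmX : Measurable X) (a : ℝ) (ha : 0 < a)
    (hb : ∀ᵐ ω ∂P, |X ω| ≤ a) (μX : ℝ) (hmean : ∫ ω, X ω ∂P = μX) (s : ℝ) :
    ∫ ω, exp (s * (X ω - μX)) ∂P ≤ exp (s ^ 2 * a ^ 2 / 2) := by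
  have hXint : Integrable X P := integrable_of_abs_le_aux P X hmX a hb
  have habs1 : |∫ ω, X ω ∂P| ≤ ∫ ω, |X ω| ∂P := by
    simpa [Real.norm_eq_abs] using norm_integral_le_integral_norm (μ := P) X
  have habs2 : ∫ ω, |X ω| ∂P ≤ a := by
    calc ∫ ω, |X ω| ∂P ≤ ∫ _, a ∂P := integral_mono_ae hXint.abs (integrable_const a) hb
      _ = a := by simp
  have hμa : |μX| ≤ a := by
    rw [← hmean]
    exact habs1.trans habs2
  have hμa' := abs_le.1 hμa
  -- pointwise convexity bound
  have hpt : ∀ x : ℝ, |x| ≤ a → exp (s * x) ≤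
      ((a - x) / (2 * a)) * exp (-(s * a)) + ((a + x) / (2 * a)) * exp (s * a) := by
    intro x hx
    have hx' := abs_le.1 hx
    have h1 : (0:ℝ) ≤ (a - x) / (2 * a) := by
      apply div_nonneg <;> linarith
    have h2 : (0:ℝ) ≤ (a + x) / (2 * a) := by
      apply div_nonneg <;> linarith
    have hsum : (a - x) / (2 * a) + (a + x) / (2 * a) = 1 := by
      field_simp
      ring
    have hcvx := convexOn_exp.2 (Set.mem_univ (-(s * a))) (Set.mem_univ (s * a)) h1 h2 hsum
    simp only [smul_eq_mul] at hcvx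
    have harg : (a - x) / (2 * a) * -(s * a) + (a + x) / (2 * a) * (s * a) = s * x := by
      field_simp
      ring
    rwa [harg] at hcvx
  -- integrate
  have hint1 : Integrable (fun ω => exp (s * X ω)) P := by
    refine Integrable.mono' (integrable_const (exp (|s| * a))) ?_ ?_
    · exact (hmX.const_mul s).exp.aestronglyMeasurable
    · filter_upwards [hb] with ω hω
      rw [Real.norm_eq_abs, abs_of_pos (Real.exp_pos _), Real.exp_le_exp]
      calc s * X ω ≤ |s * X ω| := le_abs_self _
        _ = |s| * |X ω| := abs_mul _ _
        _ ≤ |s| * a := by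
            apply mul_le_mul_of_nonneg_left hω (abs_nonneg s)
  have hint2 : Integrable (fun ω =>
      ((a - X ω) / (2 * a)) * exp (-(s * a)) + ((a + X ω) / (2 * a)) * exp (s * a)) P := by
    apply Integrable.add
    · exact (((integrable_const a).sub hXint).div_const _).mul_const _
    · exact (((integrable_const a).add hXint).div_const _).mul_const _
  have hmono : ∫ ω, exp (s * X ω) ∂P ≤
      ∫ ω, (((a - X ω) / (2 * a)) * exp (-(s * a)) + ((a + X ω) / (2 * a)) * exp (s * a)) ∂P := by
    refine integral_mono_ae hint1 hint2 ?_
    filter_upwards [hb] with ω hω using hpt _ hω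
  have hRHS : ∫ ω, (((a - X ω) / (2 * a)) * exp (-(s * a)) + ((a + X ω) / (2 * a)) * exp (s * a)) ∂P
      = ((a - μX) / (2 * a)) * exp (-(s * a)) + ((a + μX) / (2 * a)) * exp (s * a) := by
    have hptw : (fun ω => (a - X ω) / (2 * a) * exp (-(s * a)) + (a + X ω) / (2 * a) * exp (s * a))
        = fun ω => (exp (-(s * a)) + exp (s * a)) / 2
          + X ω * ((exp (s * a) - exp (-(s * a))) / (2 * a)) := by
      ext ω
      field_simp
      ring
    rw [hptw, integral_add (integrable_const _) (hXint.mul_const _), integral_const,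
      integral_mul_const, hmean]
    simp only [probReal_univ, measure_univ, ENNReal.toReal_one, one_smul]
    field_simp
    ring
  -- pull out the mean
  have hpull : ∫ ω, exp (s * (X ω - μX)) ∂P = (∫ ω, exp (s * X ω) ∂P) * exp (-(s * μX)) := by
    rw [← integral_mul_const]
    congr 1
    ext ω
    rw [← Real.exp_add]
    ring_nf
  set p : ℝ := (a + μX) / (2 * a) with hp
  have hp0 : 0 ≤ p := by apply div_nonneg <;> linarith
  have hp1 : p ≤ 1 := by
    rw [div_le_one (by linarith)]
    linarith
  have hq : (a - μX) / (2 * a) = 1 - p := by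
    rw [hp, eq_sub_iff_add_eq, ← add_div, div_eq_one_iff_eq (by positivity)]
    ring
  have hfinal : (((a - μX) / (2 * a)) * exp (-(s * a)) + ((a + μX) / (2 * a)) * exp (s * a))
      * exp (-(s * μX))
      = (1 - p) * exp (-(p * (2 * a * s))) + p * exp ((1 - p) * (2 * a * s)) := by
    rw [hq, add_mul, mul_assoc, mul_assoc, ← Real.exp_add, ← Real.exp_add]
    have e1 : -(s * a) + -(s * μX) = -(p * (2 * a * s)) := by
      rw [hp]; field_simp; ring
    have e2 : s * a + -(s * μX) = (1 - p) * (2 * a * s) := by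
      rw [hp]; field_simp; ring
    rw [e1, e2]
  calc ∫ ω, exp (s * (X ω - μX)) ∂P
      = (∫ ω, exp (s * X ω) ∂P) * exp (-(s * μX)) := hpull
    _ ≤ (((a - μX) / (2 * a)) * exp (-(s * a)) + ((a + μX) / (2 * a)) * exp (s * a))
        * exp (-(s * μX)) := by
        apply mul_le_mul_of_nonneg_right (hmono.trans_eq hRHS) (Real.exp_pos _).le
    _ = (1 - p) * exp (-(p * (2 * a * s))) + p * exp ((1 - p) * (2 * a * s)) := hfinal
    _ ≤ exp ((2 * a * s) ^ 2 / 8) := hoeffding_key p (2 * a * s) hp0 hp1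
    _ = exp (s ^ 2 * a ^ 2 / 2) := by ring_nf

open MeasureTheory ProbabilityTheory

/-- Hoeffding bound on `P(W_m^- < 0)` for bounded independent samples whose
means shift from `μ₁` to `μ₂ > μ₁` at the boundary `n₁`:
`P(W_m^- < 0) ≤ exp(-2n₁²mΔμ²/(M²n(n-m)))`. -/
theorem hoeffding_bound_W_minus
    {Ω : Type*} [MeasurableSpace Ω] (P : Measure Ω) [IsProbabilityMeasure P]
    (n1 n2 n : ℕ) (hn1 : 1 ≤ n1) (hn2 : 1 ≤ n2) (hn : n = n1 + n2)
    (X : ℕ → Ω → ℝ) (hXmeas : ∀ i, Measurable (X i))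
    (hindep : iIndepFun X P)
    (M : ℝ) (hM : 0 < M)
    (hbdd : ∀ i ∈ Finset.Icc 1 n, ∀ᵐ ω ∂P, |X i ω| ≤ M / 2)
    (hint : ∀ i ∈ Finset.Icc 1 n, Integrable (X i) P)
    (μ1 μ2 : ℝ) (hΔμ : 0 < μ2 - μ1)
    (hmean1 : ∀ i ∈ Finset.Icc 1 n1, ∫ ω, X i ω ∂P = μ1)
    (hmean2 : ∀ i ∈ Finset.Icc (n1 + 1) n, ∫ ω, X i ω ∂P = μ2)
    (m : ℕ) (hm1 : 1 ≤ m) (hm : m ≤ n2 - 1)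
    (Y : ℕ → Ω → ℝ)
    (hY : ∀ k ω, Y k ω = (1 / ((n2 : ℝ) - k)) * ∑ i ∈ Finset.Icc (n1 + k + 1) n, X i ω
      - (1 / ((n1 : ℝ) + k)) * ∑ i ∈ Finset.Icc 1 (n1 + k), X i ω)
    (W : Ω → ℝ)
    (hW : ∀ ω, W ω = ((n1 : ℝ) * n2 / n) * Y 0 ω
      - (((n1 : ℝ) + m) * ((n2 : ℝ) - m) / n) * Y m ω) :
    P {ω | W ω < 0} ≤ ENNReal.ofReal
      (Real.exp (-(2 * (n1 : ℝ) ^ 2 * m * (μ2 - μ1) ^ 2)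
        / (M ^ 2 * n * ((n : ℝ) - m)))) := by
  classical
  have hmn2 : m < n2 := by omega
  have hn1mn : n1 + m ≤ n := by omega
  have hnpos : 0 < n := by omega
  have hn1R : (0:ℝ) < n1 := by exact_mod_cast hn1
  have hn2R : (0:ℝ) < n2 := by exact_mod_cast hn2
  have hnR : (0:ℝ) < n := by exact_mod_cast hnpos
  have hmR : (0:ℝ) < m := by exact_mod_cast hm1
  have hm2R : (m:ℝ) < n2 := by exact_mod_cast hmn2
  have hmnR : (m:ℝ) < n := by exact_mod_cast (show m < n by omega)
  have hncast : (n:ℝ) = (n1:ℝ) + n2 := by rw [hn]; push_cast; ring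
  have hcast3 : ((n - (n1 + m) : ℕ) : ℝ) = (n:ℝ) - n1 - m := by
    rw [Nat.cast_sub hn1mn]; push_cast; ring
  set c : ℕ → ℝ := fun i => if n1 + 1 ≤ i ∧ i ≤ n1 + m then ((n:ℝ) - m) / n else -(m:ℝ) / n
    with hc
  set mu : ℕ → ℝ := fun i => if i ≤ n1 then μ1 else μ2 with hmu
  set Z : ℕ → Ω → ℝ := fun i ω => c i * (X i ω - mu i) with hZ
  have hZmeas : ∀ i, Measurable (Z i) := fun i => ((hXmeas i).sub_const (mu i)).const_mul (c i)
  have hZindep : iIndepFun Z P :=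
    hindep.comp (fun i (x : ℝ) => c i * (x - mu i))
      (fun i => (measurable_id.sub_const (mu i)).const_mul (c i))
  have hIcc : ∀ a b : ℕ, Finset.Icc (a + 1) b = Finset.Ioc a b := fun a b =>
    Finset.Icc_add_one_left_eq_Ioc a b
  have hIcc1 : ∀ b : ℕ, Finset.Icc 1 b = Finset.Ioc 0 b := fun b => Finset.Icc_add_one_left_eq_Ioc 0 b
  have hsplit : ∀ (f : ℕ → ℝ) (a b C : ℕ), a ≤ b → b ≤ C →
      ∑ i ∈ Finset.Ioc a C, f i = ∑ i ∈ Finset.Ioc a b, f i + ∑ i ∈ Finset.Ioc b C, f i :=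
    fun f a b C h1 h2 => (Finset.sum_Ioc_consecutive f h1 h2).symm
  -- values of c on the three pieces
  have hc1 : ∀ i ∈ Finset.Ioc 0 n1, c i = -(m:ℝ) / n := by
    intro i hi; rw [Finset.mem_Ioc] at hi
    simp only [hc]; rw [if_neg (by omega)]
  have hc2 : ∀ i ∈ Finset.Ioc n1 (n1 + m), c i = ((n:ℝ) - m) / n := by
    intro i hi; rw [Finset.mem_Ioc] at hi
    simp only [hc]; rw [if_pos (by omega)]
  have hc3 : ∀ i ∈ Finset.Ioc (n1 + m) n, c i = -(m:ℝ) / n := by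
    intro i hi; rw [Finset.mem_Ioc] at hi
    simp only [hc]; rw [if_neg (by omega)]
  have hmu1 : ∀ i ∈ Finset.Ioc 0 n1, mu i = μ1 := by
    intro i hi; rw [Finset.mem_Ioc] at hi
    simp only [hmu]; rw [if_pos (by omega)]
  have hmu2 : ∀ i ∈ Finset.Ioc n1 (n1 + m), mu i = μ2 := by
    intro i hi; rw [Finset.mem_Ioc] at hi
    simp only [hmu]; rw [if_neg (by omega)]
  have hmu3 : ∀ i ∈ Finset.Ioc (n1 + m) n, mu i = μ2 := by
    intro i hi; rw [Finset.mem_Ioc] at hi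
    simp only [hmu]; rw [if_neg (by omega)]
  -- W as a weighted sum
  have hW_eq : ∀ ω, W ω = ∑ i ∈ Finset.Icc 1 n, c i * X i ω := by
    intro ω
    rw [hW ω, hY 0 ω, hY m ω]
    simp only [Nat.add_zero, Nat.cast_zero, sub_zero, add_zero]
    rw [hIcc n1 n, hIcc1 n1, hIcc (n1 + m) n, hIcc1 (n1 + m), hIcc1 n]
    rw [hsplit (fun i => c i * X i ω) 0 (n1 + m) n (by omega) (by omega),
      hsplit (fun i => c i * X i ω) 0 n1 (n1 + m) (by omega) (by omega),
      hsplit (fun i => X i ω) n1 (n1 + m) n (by omega) (by omega),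
      hsplit (fun i => X i ω) 0 n1 (n1 + m) (by omega) (by omega)]
    have e1 : ∑ i ∈ Finset.Ioc 0 n1, c i * X i ω
        = (-(m:ℝ) / n) * ∑ i ∈ Finset.Ioc 0 n1, X i ω := by
      rw [Finset.mul_sum]
      exact Finset.sum_congr rfl fun i hi => by rw [hc1 i hi]
    have e2 : ∑ i ∈ Finset.Ioc n1 (n1 + m), c i * X i ω
        = (((n:ℝ) - m) / n) * ∑ i ∈ Finset.Ioc n1 (n1 + m), X i ω := by
      rw [Finset.mul_sum]
      exact Finset.sum_congr rfl fun i hi => by rw [hc2 i hi]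
    have e3 : ∑ i ∈ Finset.Ioc (n1 + m) n, c i * X i ω
        = (-(m:ℝ) / n) * ∑ i ∈ Finset.Ioc (n1 + m) n, X i ω := by
      rw [Finset.mul_sum]
      exact Finset.sum_congr rfl fun i hi => by rw [hc3 i hi]
    rw [e1, e2, e3]
    rw [hncast]
    have d3 : (n2:ℝ) - m ≠ 0 := sub_ne_zero.2 hm2R.ne'
    have d4 : (n1:ℝ) + m ≠ 0 := by positivity
    have d5 : (n1:ℝ) + n2 ≠ 0 := by positivity
    field_simp
    ring
  -- the mean shift K
  have hK : ∑ i ∈ Finset.Icc 1 n, c i * mu i = (m:ℝ) * n1 * (μ2 - μ1) / n := by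
    rw [hIcc1 n,
      hsplit (fun i => c i * mu i) 0 (n1 + m) n (by omega) (by omega),
      hsplit (fun i => c i * mu i) 0 n1 (n1 + m) (by omega) (by omega)]
    have e1 : ∑ i ∈ Finset.Ioc 0 n1, c i * mu i
        = ∑ _i ∈ Finset.Ioc 0 n1, (-(m:ℝ) / n) * μ1 :=
      Finset.sum_congr rfl fun i hi => by rw [hc1 i hi, hmu1 i hi]
    have e2 : ∑ i ∈ Finset.Ioc n1 (n1 + m), c i * mu i
        = ∑ _i ∈ Finset.Ioc n1 (n1 + m), (((n:ℝ) - m) / n) * μ2 :=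
      Finset.sum_congr rfl fun i hi => by rw [hc2 i hi, hmu2 i hi]
    have e3 : ∑ i ∈ Finset.Ioc (n1 + m) n, c i * mu i
        = ∑ _i ∈ Finset.Ioc (n1 + m) n, (-(m:ℝ) / n) * μ2 :=
      Finset.sum_congr rfl fun i hi => by rw [hc3 i hi, hmu3 i hi]
    rw [e1, e2, e3, Finset.sum_const, Finset.sum_const, Finset.sum_const,
      Nat.card_Ioc, Nat.card_Ioc, Nat.card_Ioc, nsmul_eq_mul, nsmul_eq_mul, nsmul_eq_mul]
    simp only [Nat.sub_zero, Nat.add_sub_cancel_left, hcast3]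
    field_simp
    ring
  -- the sum of squared coefficients
  have hSc : ∑ i ∈ Finset.Icc 1 n, (c i) ^ 2 = (m:ℝ) * ((n:ℝ) - m) / n := by
    rw [hIcc1 n,
      hsplit (fun i => (c i) ^ 2) 0 (n1 + m) n (by omega) (by omega),
      hsplit (fun i => (c i) ^ 2) 0 n1 (n1 + m) (by omega) (by omega)]
    have e1 : ∑ i ∈ Finset.Ioc 0 n1, (c i) ^ 2
        = ∑ _i ∈ Finset.Ioc 0 n1, (-(m:ℝ) / n) ^ 2 :=
      Finset.sum_congr rfl fun i hi => by rw [hc1 i hi]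
    have e2 : ∑ i ∈ Finset.Ioc n1 (n1 + m), (c i) ^ 2
        = ∑ _i ∈ Finset.Ioc n1 (n1 + m), (((n:ℝ) - m) / n) ^ 2 :=
      Finset.sum_congr rfl fun i hi => by rw [hc2 i hi]
    have e3 : ∑ i ∈ Finset.Ioc (n1 + m) n, (c i) ^ 2
        = ∑ _i ∈ Finset.Ioc (n1 + m) n, (-(m:ℝ) / n) ^ 2 :=
      Finset.sum_congr rfl fun i hi => by rw [hc3 i hi]
    rw [e1, e2, e3, Finset.sum_const, Finset.sum_const, Finset.sum_const,
      Nat.card_Ioc, Nat.card_Ioc, Nat.card_Ioc, nsmul_eq_mul, nsmul_eq_mul, nsmul_eq_mul]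
    simp only [Nat.sub_zero, Nat.add_sub_cancel_left, hcast3]
    field_simp
    ring
  set K : ℝ := (m:ℝ) * n1 * (μ2 - μ1) / n with hKdef
  have hKpos : 0 < K := by
    rw [hKdef]
    exact div_pos (mul_pos (mul_pos hmR hn1R) hΔμ) hnR
  set Sc : ℝ := (m:ℝ) * ((n:ℝ) - m) / n with hScdef
  have hScpos : 0 < Sc := by
    rw [hScdef]
    exact div_pos (mul_pos hmR (by linarith)) hnR
  set t : ℝ := -(4 * K) / (M ^ 2 * Sc) with htdef
  have ht : t ≤ 0 := by
    rw [htdef]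
    apply div_nonpos_of_nonpos_of_nonneg
    · nlinarith
    · positivity
  -- W = ∑ Z + K
  have hWZ : ∀ ω, W ω = (∑ i ∈ Finset.Icc 1 n, Z i) ω + K := by
    intro ω
    rw [Finset.sum_apply, hW_eq ω, ← hK]
    simp only [hZ]
    rw [← Finset.sum_add_distrib]
    exact Finset.sum_congr rfl fun i _ => by ring
  -- means of X i
  have hmean' : ∀ i ∈ Finset.Icc 1 n, ∫ ω, X i ω ∂P = mu i := by
    intro i hi; rw [Finset.mem_Icc] at hi
    by_cases h : i ≤ n1
    · simp only [hmu]; rw [if_pos h]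
      exact hmean1 i (Finset.mem_Icc.2 ⟨hi.1, h⟩)
    · simp only [hmu]; rw [if_neg h]
      exact hmean2 i (Finset.mem_Icc.2 ⟨by omega, hi.2⟩)
  -- integrability of exp(r * Z i)
  have hint_exp : ∀ (r : ℝ), ∀ i ∈ Finset.Icc 1 n,
      Integrable (fun ω => Real.exp (r * Z i ω)) P := by
    intro r i hi
    refine Integrable.mono'
      (integrable_const (Real.exp (|r * c i| * (M / 2 + |mu i|)))) ?_ ?_
    · exact ((hZmeas i).const_mul r).exp.aestronglyMeasurable
    · filter_upwards [hbdd i hi] with ω hω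
      rw [Real.norm_eq_abs, abs_of_pos (Real.exp_pos _), Real.exp_le_exp]
      have h1 : |Z i ω| ≤ |c i| * (M / 2 + |mu i|) := by
        simp only [hZ]
        rw [abs_mul]
        refine mul_le_mul_of_nonneg_left ?_ (abs_nonneg _)
        calc |X i ω - mu i| ≤ |X i ω| + |mu i| := by
              have := abs_add_le (X i ω) (-(mu i))
              simpa [sub_eq_add_neg] using this
          _ ≤ M / 2 + |mu i| := by linarith
      calc r * Z i ω ≤ |r * Z i ω| := le_abs_self _
        _ = |r| * |Z i ω| := abs_mul _ _
        _ ≤ |r| * (|c i| * (M / 2 + |mu i|)) :=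
            mul_le_mul_of_nonneg_left h1 (abs_nonneg r)
        _ = |r * c i| * (M / 2 + |mu i|) := by rw [abs_mul]; ring
  -- per-term mgf bound
  have hmgf_i : ∀ i ∈ Finset.Icc 1 n,
      mgf (Z i) P t ≤ Real.exp (t ^ 2 * (c i) ^ 2 * M ^ 2 / 8) := by
    intro i hi
    have h1 : mgf (Z i) P t = ∫ ω, Real.exp ((t * c i) * (X i ω - mu i)) ∂P := by
      rw [mgf]
      congr 1
      ext ω
      simp only [hZ]
      rw [← mul_assoc]
    rw [h1]
    have h2 := hoeffding_mgf_aux P (X i) (hXmeas i) (M / 2) (by linarith) (hbdd i hi)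
      (mu i) (hmean' i hi) (t * c i)
    calc ∫ ω, Real.exp ((t * c i) * (X i ω - mu i)) ∂P
        ≤ Real.exp ((t * c i) ^ 2 * (M / 2) ^ 2 / 2) := h2
      _ = Real.exp (t ^ 2 * (c i) ^ 2 * M ^ 2 / 8) := by ring_nf
  -- Chernoff
  have hSint : Integrable (fun ω => Real.exp (t * (∑ i ∈ Finset.Icc 1 n, Z i) ω)) P :=
    hZindep.integrable_exp_mul_sum hZmeas (fun i hi => hint_exp t i hi)
  have hchern := measure_le_le_exp_mul_mgf (μ := P) (X := ∑ i ∈ Finset.Icc 1 n, Z i)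
    (-K) ht hSint
  have hmgf_sum : mgf (∑ i ∈ Finset.Icc 1 n, Z i) P t = ∏ i ∈ Finset.Icc 1 n, mgf (Z i) P t :=
    hZindep.mgf_sum hZmeas _
  have hprod : ∏ i ∈ Finset.Icc 1 n, mgf (Z i) P t ≤ Real.exp (t ^ 2 * M ^ 2 * Sc / 8) := by
    calc ∏ i ∈ Finset.Icc 1 n, mgf (Z i) P t
        ≤ ∏ i ∈ Finset.Icc 1 n, Real.exp (t ^ 2 * (c i) ^ 2 * M ^ 2 / 8) :=
          Finset.prod_le_prod (fun i _ => mgf_nonneg) hmgf_i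
      _ = Real.exp (∑ i ∈ Finset.Icc 1 n, t ^ 2 * (c i) ^ 2 * M ^ 2 / 8) :=
          (Real.exp_sum _ _).symm
      _ = Real.exp (t ^ 2 * M ^ 2 * Sc / 8) := by
          congr 1
          have : ∑ i ∈ Finset.Icc 1 n, t ^ 2 * (c i) ^ 2 * M ^ 2 / 8
              = (t ^ 2 * M ^ 2 / 8) * ∑ i ∈ Finset.Icc 1 n, (c i) ^ 2 := by
            rw [Finset.mul_sum]
            exact Finset.sum_congr rfl fun i _ => by ring
          rw [this, hSc]
          ring
  have hexp_eq : t * K + t ^ 2 * M ^ 2 * Sc / 8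
      = -(2 * (n1:ℝ) ^ 2 * m * (μ2 - μ1) ^ 2) / (M ^ 2 * n * ((n:ℝ) - m)) := by
    rw [htdef, hKdef, hScdef]
    have d1 : ((n:ℝ) - m) ≠ 0 := sub_ne_zero.2 hmnR.ne'
    field_simp
    ring
  have htail : (P {ω | (∑ i ∈ Finset.Icc 1 n, Z i) ω ≤ -K}).toReal ≤
      Real.exp (-(2 * (n1:ℝ) ^ 2 * m * (μ2 - μ1) ^ 2) / (M ^ 2 * n * ((n:ℝ) - m))) := by
    calc (P {ω | (∑ i ∈ Finset.Icc 1 n, Z i) ω ≤ -K}).toReal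
        ≤ Real.exp (-t * -K) * mgf (∑ i ∈ Finset.Icc 1 n, Z i) P t := hchern
      _ ≤ Real.exp (t * K) * Real.exp (t ^ 2 * M ^ 2 * Sc / 8) := by
          rw [neg_mul_neg, hmgf_sum]
          exact mul_le_mul_of_nonneg_left hprod (Real.exp_pos _).le
      _ = Real.exp (t * K + t ^ 2 * M ^ 2 * Sc / 8) := (Real.exp_add _ _).symm
      _ = _ := by rw [hexp_eq]
  have hsub : {ω | W ω < 0} ⊆ {ω | (∑ i ∈ Finset.Icc 1 n, Z i) ω ≤ -K} := by
    intro ω hω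
    simp only [Set.mem_setOf_eq] at hω ⊢
    have := hWZ ω
    linarith
  calc P {ω | W ω < 0} ≤ P {ω | (∑ i ∈ Finset.Icc 1 n, Z i) ω ≤ -K} := measure_mono hsub
    _ = ENNReal.ofReal ((P {ω | (∑ i ∈ Finset.Icc 1 n, Z i) ω ≤ -K}).toReal) :=
        (ENNReal.ofReal_toReal (measure_ne_top _ _)).symm
    _ ≤ ENNReal.ofReal (Real.exp (-(2 * (n1:ℝ) ^ 2 * m * (μ2 - μ1) ^ 2)
        / (M ^ 2 * n * ((n:ℝ) - m)))) := ENNReal.ofReal_le_ofReal htail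
end

section
/- Let (Ω, F, P) be a probability space and X_1,…,X_n independent real-valued random variables with |X_i| ≤ M/2 almost surely for some M > 0, E[X_i] = μ1 for 1 ≤ i ≤ n1 and E[X_i] = μ2 for n1 < i ≤ n, where n1, n2 ≥ 1, n = n1 + n2, and Δμ := μ2 − μ1 > 0. Then for every integer m with 1 ≤ m ≤ n2 − 1, P(W_m^+ < 0) ≤ exp( −2·n1²·(2n2−m)²·Δμ² / (M²·n·(m·(n−m−4n1) + 4·n1·(n−n1))) ). -/
open MeasureTheory ProbabilityTheory

open Real in

lemma hoeff_core (p : ℝ) (hp0 : 0 ≤ p) (hp1 : p ≤ 1) (h : ℝ) :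
    Real.log (1 - p + p * Real.exp h) - p * h ≤ h ^ 2 / 8 := by
  have hD : ∀ x : ℝ, 0 < 1 - p + p * Real.exp x := by
    intro x
    rcases eq_or_lt_of_le hp0 with h0 | h0
    · simp [← h0]
    · exact add_pos_of_nonneg_of_pos (sub_nonneg.2 hp1) (mul_pos h0 (Real.exp_pos x))
  set f : ℝ → ℝ := fun x => x ^ 2 / 8 - (Real.log (1 - p + p * Real.exp x) - p * x) with hf
  set φ : ℝ → ℝ := fun x => x / 4 + p - p * Real.exp x / (1 - p + p * Real.exp x) with hφ
  have hDd : ∀ x : ℝ, HasDerivAt (fun x => 1 - p + p * Real.exp x) (p * Real.exp x) x := by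
    intro x
    exact ((Real.hasDerivAt_exp x).const_mul p).const_add (1 - p)
  have hfd : ∀ x : ℝ, HasDerivAt f (φ x) x := by
    intro x
    have h1 : HasDerivAt (fun x : ℝ => x ^ 2 / 8) (x / 4) x := by
      have := (hasDerivAt_pow 2 x).div_const 8
      refine this.congr_deriv ?_; norm_num; ring
    have h2 : HasDerivAt (fun x => Real.log (1 - p + p * Real.exp x))
        (p * Real.exp x / (1 - p + p * Real.exp x)) x := (hDd x).log (hD x).ne'
    have h3 : HasDerivAt (fun x : ℝ => p * x) p x := by
      simpa using (hasDerivAt_id x).const_mul p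
    have := h1.sub (h2.sub h3)
    refine this.congr_deriv ?_; ring
  have hφd : ∀ x : ℝ, HasDerivAt φ
      (1 / 4 - p * Real.exp x * (1 - p) / (1 - p + p * Real.exp x) ^ 2) x := by
    intro x
    have h1 : HasDerivAt (fun x : ℝ => x / 4 + p) (1 / 4) x := by
      simpa using ((hasDerivAt_id x).div_const 4).add_const p
    have h2 : HasDerivAt (fun x => p * Real.exp x / (1 - p + p * Real.exp x))
        ((p * Real.exp x * (1 - p + p * Real.exp x) - p * Real.exp x * (p * Real.exp x)) /
          (1 - p + p * Real.exp x) ^ 2) x :=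
      ((Real.hasDerivAt_exp x).const_mul p).div (hDd x) (hD x).ne'
    have := h1.sub h2
    refine this.congr_deriv ?_
    have := (hD x).ne'
    field_simp
    ring
  have hφnn : ∀ x : ℝ, 0 ≤ 1 / 4 - p * Real.exp x * (1 - p) / (1 - p + p * Real.exp x) ^ 2 := by
    intro x
    have hDx := hD x
    have key : 4 * (p * Real.exp x * (1 - p)) ≤ (1 - p + p * Real.exp x) ^ 2 := by
      nlinarith [sq_nonneg (p * Real.exp x - (1 - p))]
    rw [sub_nonneg, div_le_iff₀ (by positivity)]
    linarith
  have hφmono : Monotone φ := by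
    apply monotone_of_deriv_nonneg
    · exact fun x => (hφd x).differentiableAt
    · intro x
      rw [(hφd x).deriv]
      exact hφnn x
  have hφ0 : φ 0 = 0 := by
    simp [hφ]
  have hf0 : f 0 = 0 := by
    simp [hf]
  have key : 0 ≤ f h := by
    rcases le_or_gt 0 h with hh | hh
    · have : MonotoneOn f (Set.Ici 0) := by
        apply monotoneOn_of_deriv_nonneg (convex_Ici 0)
        · exact Continuous.continuousOn (by
            fun_prop (disch := intro x; exact (hD x).ne'))
        · intro x _
          exact (hfd x).differentiableAt.differentiableWithinAt
        · intro x hx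
          rw [(hfd x).deriv]
          rw [interior_Ici] at hx
          calc (0:ℝ) = φ 0 := hφ0.symm
            _ ≤ φ x := hφmono (le_of_lt hx)
      have := this (Set.self_mem_Ici) (Set.mem_Ici.2 hh) hh
      linarith [hf0 ▸ this]
    · have : AntitoneOn f (Set.Iic 0) := by
        apply antitoneOn_of_deriv_nonpos (convex_Iic 0)
        · exact Continuous.continuousOn (by
            fun_prop (disch := intro x; exact (hD x).ne'))
        · intro x _
          exact (hfd x).differentiableAt.differentiableWithinAt
        · intro x hx
          rw [(hfd x).deriv]
          rw [interior_Iic] at hx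
          calc φ x ≤ φ 0 := hφmono (le_of_lt hx)
            _ = 0 := hφ0
      have := this (Set.mem_Iic.2 hh.le) (Set.self_mem_Iic) hh.le
      linarith [hf0 ▸ this]
  simp only [hf] at key
  linarith


lemma hoeff_mgf {Ω : Type*} [MeasurableSpace Ω] (P : Measure Ω) [IsProbabilityMeasure P]
    (Z : Ω → ℝ) (hmeas : AEMeasurable Z P) (a b : ℝ)
    (hZ : ∀ᵐ ω ∂P, Z ω ∈ Set.Icc a b)
    (hmean : ∫ ω, Z ω ∂P = 0) (t : ℝ) :
    mgf Z P t ≤ Real.exp (t ^ 2 * (b - a) ^ 2 / 8) := by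
  have hZint : Integrable Z P := by
    refine Integrable.mono' (integrable_const (max |a| |b|)) hmeas.aestronglyMeasurable ?_
    filter_upwards [hZ] with ω hω
    rw [Real.norm_eq_abs]
    exact abs_le_max_abs_abs hω.1 hω.2
  have hab : a ≤ b := by
    rcases hZ.exists with ⟨ω, hω⟩
    exact le_trans hω.1 hω.2
  have ha : a ≤ 0 := by
    have h2 : a ≤ ∫ ω, Z ω ∂P := by
      have := integral_mono_ae (integrable_const a) hZint (hZ.mono fun ω hω => hω.1)
      simpa using this
    linarith [hmean ▸ h2]
  have hb : 0 ≤ b := by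
    have h2 : (∫ ω, Z ω ∂P) ≤ b := by
      have := integral_mono_ae hZint (integrable_const b) (hZ.mono fun ω hω => hω.2)
      simpa using this
    linarith [hmean ▸ h2]
  rcases eq_or_lt_of_le hab with hab' | hab'
  · have ha0 : a = 0 := le_antisymm ha (hab' ▸ hb)
    have hZ0 : ∀ᵐ ω ∂P, Real.exp (t * Z ω) = 1 := by
      filter_upwards [hZ] with ω hω
      rw [← hab', ha0] at hω
      simp [le_antisymm hω.2 hω.1]
    have hm : mgf Z P t = 1 := by
      rw [mgf, integral_congr_ae hZ0]; simp
    rw [hm]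
    exact Real.one_le_exp (by positivity)
  · set p : ℝ := -a / (b - a) with hp
    set h : ℝ := t * (b - a) with hh
    have hba : (0:ℝ) < b - a := by linarith
    have hp0 : 0 ≤ p := by
      apply div_nonneg (by linarith) hba.le
    have hp1 : p ≤ 1 := by
      rw [hp, div_le_one hba]; linarith
    -- pointwise convexity bound
    have hptwise : ∀ᵐ ω ∂P, Real.exp (t * Z ω) ≤
        (b - Z ω) * (Real.exp (t * a) / (b - a)) + (Z ω - a) * (Real.exp (t * b) / (b - a)) := by
      filter_upwards [hZ] with ω hω
      have hα : 0 ≤ (b - Z ω) / (b - a) := div_nonneg (by linarith [hω.2]) hba.le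
      have hβ : 0 ≤ (Z ω - a) / (b - a) := div_nonneg (by linarith [hω.1]) hba.le
      have hαβ : (b - Z ω) / (b - a) + (Z ω - a) / (b - a) = 1 := by
        rw [← add_div, show b - Z ω + (Z ω - a) = b - a by ring, div_self hba.ne']
      have hcvx := convexOn_exp.2 (Set.mem_univ (t * a)) (Set.mem_univ (t * b)) hα hβ hαβ
      simp only [smul_eq_mul] at hcvx
      have harg : (b - Z ω) / (b - a) * (t * a) + (Z ω - a) / (b - a) * (t * b) = t * Z ω := by
        field_simp
        ring
      rw [harg] at hcvx
      calc Real.exp (t * Z ω) ≤ (b - Z ω) / (b - a) * Real.exp (t * a)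
            + (Z ω - a) / (b - a) * Real.exp (t * b) := hcvx
        _ = (b - Z ω) * (Real.exp (t * a) / (b - a)) + (Z ω - a) * (Real.exp (t * b) / (b - a)) := by
          ring
    have hi1 : Integrable (fun ω => (b - Z ω) * (Real.exp (t * a) / (b - a))) P := by
      exact ((integrable_const b).sub hZint).mul_const _
    have hi2 : Integrable (fun ω => (Z ω - a) * (Real.exp (t * b) / (b - a))) P := by
      exact (hZint.sub (integrable_const a)).mul_const _
    have hgint : Integrable (fun ω => (b - Z ω) * (Real.exp (t * a) / (b - a))
        + (Z ω - a) * (Real.exp (t * b) / (b - a))) P := hi1.add hi2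
    have hexpint : Integrable (fun ω => Real.exp (t * Z ω)) P := by
      refine Integrable.mono' hgint (Real.measurable_exp.comp_aemeasurable (hmeas.const_mul t)).aestronglyMeasurable ?_
      filter_upwards [hptwise] with ω hω
      rw [Real.norm_eq_abs, abs_of_pos (Real.exp_pos _)]
      exact hω
    have hmgf_le : mgf Z P t ≤ b * Real.exp (t * a) / (b - a) + (-a) * Real.exp (t * b) / (b - a) := by
      rw [mgf]
      calc ∫ ω, Real.exp (t * Z ω) ∂P ≤ ∫ ω, ((b - Z ω) * (Real.exp (t * a) / (b - a))
            + (Z ω - a) * (Real.exp (t * b) / (b - a))) ∂P :=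
            integral_mono_ae hexpint hgint hptwise
        _ = b * Real.exp (t * a) / (b - a) + (-a) * Real.exp (t * b) / (b - a) := by
            rw [integral_add hi1 hi2, integral_mul_const, integral_mul_const,
              integral_sub (integrable_const b) hZint, integral_sub hZint (integrable_const a),
              hmean]
            simp only [integral_const, measure_univ, ENNReal.toReal_one, smul_eq_mul, one_mul, probReal_univ]
            ring
    have hDpos : 0 < 1 - p + p * Real.exp h := by
      rcases eq_or_lt_of_le hp0 with h0 | h0
      · simp [← h0]
      · exact add_pos_of_nonneg_of_pos (sub_nonneg.2 hp1) (mul_pos h0 (Real.exp_pos _))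
    have hrewrite : b * Real.exp (t * a) / (b - a) + (-a) * Real.exp (t * b) / (b - a)
        = (1 - p + p * Real.exp h) * Real.exp (-(p * h)) := by
      have htb : t * b = t * a + h := by rw [hh]; ring
      have hph : -(p * h) = t * a := by
        rw [hp, hh]; field_simp
      rw [htb, Real.exp_add, hph, hp]
      field_simp
      ring
    calc mgf Z P t ≤ (1 - p + p * Real.exp h) * Real.exp (-(p * h)) := hrewrite ▸ hmgf_le
      _ = Real.exp (Real.log (1 - p + p * Real.exp h) - p * h) := by
          rw [Real.exp_sub, Real.exp_log hDpos, div_eq_mul_inv, ← Real.exp_neg]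
      _ ≤ Real.exp (h ^ 2 / 8) := Real.exp_le_exp.2 (hoeff_core p hp0 hp1 h)
      _ = Real.exp (t ^ 2 * (b - a) ^ 2 / 8) := by rw [hh]; ring_nf


lemma hoeff_mgf_scaled {Ω : Type*} [MeasurableSpace Ω] (P : Measure Ω) [IsProbabilityMeasure P]
    (X0 : Ω → ℝ) (hmeas : Measurable X0) (M : ℝ)
    (hb : ∀ᵐ ω ∂P, |X0 ω| ≤ M / 2) (hint : Integrable X0 P) (c t : ℝ) :
    mgf (fun ω => c * (X0 ω - ∫ ω, X0 ω ∂P)) P t ≤ Real.exp (t ^ 2 * (c ^ 2 * M ^ 2) / 8) := by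
  set μ0 : ℝ := ∫ ω, X0 ω ∂P with hμ0
  have hmean : ∫ ω, c * (X0 ω - μ0) ∂P = 0 := by
    rw [integral_const_mul, integral_sub hint (integrable_const _), integral_const]
    simp
    exact Or.inr (sub_self _)
  have hameas : AEMeasurable (fun ω => c * (X0 ω - μ0)) P :=
    ((hmeas.sub_const μ0).const_mul c).aemeasurable
  rcases le_total 0 c with hc | hc
  · have hZ : ∀ᵐ ω ∂P, c * (X0 ω - μ0) ∈ Set.Icc (c * (-(M/2) - μ0)) (c * (M/2 - μ0)) := by
      filter_upwards [hb] with ω hω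
      rw [abs_le] at hω
      constructor
      · exact mul_le_mul_of_nonneg_left (by linarith [hω.1]) hc
      · exact mul_le_mul_of_nonneg_left (by linarith [hω.2]) hc
    have := hoeff_mgf P _ hameas _ _ hZ hmean t
    convert this using 3
    ring
  · have hZ : ∀ᵐ ω ∂P, c * (X0 ω - μ0) ∈ Set.Icc (c * (M/2 - μ0)) (c * (-(M/2) - μ0)) := by
      filter_upwards [hb] with ω hω
      rw [abs_le] at hω
      constructor
      · exact mul_le_mul_of_nonpos_left (by linarith [hω.2]) hc
      · exact mul_le_mul_of_nonpos_left (by linarith [hω.1]) hc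
    have := hoeff_mgf P _ hameas _ _ hZ hmean t
    convert this using 3
    ring

set_option maxHeartbeats 1000000 in
lemma exp_alg (a b mm MM Δ nn S EW V tt : ℝ) (ha : 0 < a) (hb : 0 < b)
    (hmm0 : 0 ≤ mm) (hmb : mm < b) (hM : 0 < MM) (hΔ : 0 < Δ)
    (hnn : nn = a + b)
    (hS : S = a*(2*b-mm)^2 + mm*(a-b+mm)^2 + (b-mm)*(2*a+mm)^2)
    (hEW : EW = a*(2*b-mm)*Δ/nn) (hV : V = MM^2*(S/nn^2)) (htt : tt = -4*EW/V) :
    tt * EW + tt^2 * V / 8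
      = -(2*a^2*(2*b-mm)^2*Δ^2)/(MM^2*nn*(mm*(nn-mm-4*a)+4*a*(nn-a))) := by
  have h1 : 0 < 2*b - mm := by linarith
  have hSpos : 0 < S := by
    rw [hS]
    nlinarith [mul_nonneg hmm0 (sq_nonneg (a-b+mm)),
      mul_nonneg (by linarith : (0:ℝ) ≤ b - mm) (sq_nonneg (2*a+mm)),
      mul_pos ha (pow_pos h1 2)]
  have hab : (0:ℝ) < a + b := by linarith
  subst hnn
  have hVpos : 0 < V := by
    rw [hV]
    exact mul_pos (by positivity) (div_pos hSpos (by positivity))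
  rw [htt]
  have step1 : (-4*EW/V)*EW + (-4*EW/V)^2*V/8 = -2*EW^2/V := by
    field_simp
    ring
  rw [step1, hEW, hV]
  have hden : MM^2*(a+b)*(mm*((a+b)-mm-4*a)+4*a*((a+b)-a)) = MM^2*S := by
    rw [hS]; ring
  have hSpos' : 0 < a*(2*b-mm)^2 + mm*(a-b+mm)^2 + (b-mm)*(2*a+mm)^2 := hS ▸ hSpos
  rw [hden, hS]
  rw [div_eq_div_iff (mul_pos (pow_pos hM 2) (div_pos hSpos' (pow_pos hab 2))).ne'
    (mul_pos (pow_pos hM 2) hSpos').ne']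
  field_simp



set_option maxHeartbeats 1000000 in
/-- Hoeffding bound on `P(W_m^+ < 0)` for bounded independent samples whose
means shift from `μ₁` to `μ₂ > μ₁` at the boundary `n₁`:
`P(W_m^+ < 0) ≤ exp(-2n₁²(2n₂-m)²Δμ²/(M²n(m(n-m-4n₁)+4n₁(n-n₁))))`. -/
theorem hoeffding_bound_W_plus
    {Ω : Type*} [MeasurableSpace Ω] (P : Measure Ω) [IsProbabilityMeasure P]
    (n1 n2 n : ℕ) (hn1 : 1 ≤ n1) (hn2 : 1 ≤ n2) (hn : n = n1 + n2)
    (X : ℕ → Ω → ℝ) (hXmeas : ∀ i, Measurable (X i))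
    (hindep : iIndepFun X P)
    (M : ℝ) (hM : 0 < M)
    (hbdd : ∀ i ∈ Finset.Icc 1 n, ∀ᵐ ω ∂P, |X i ω| ≤ M / 2)
    (hint : ∀ i ∈ Finset.Icc 1 n, Integrable (X i) P)
    (μ1 μ2 : ℝ) (hΔμ : 0 < μ2 - μ1)
    (hmean1 : ∀ i ∈ Finset.Icc 1 n1, ∫ ω, X i ω ∂P = μ1)
    (hmean2 : ∀ i ∈ Finset.Icc (n1 + 1) n, ∫ ω, X i ω ∂P = μ2)
    (m : ℕ) (hm1 : 1 ≤ m) (hm : m ≤ n2 - 1)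
    (Y : ℕ → Ω → ℝ)
    (hY : ∀ k ω, Y k ω = (1 / ((n2 : ℝ) - k)) * ∑ i ∈ Finset.Icc (n1 + k + 1) n, X i ω
      - (1 / ((n1 : ℝ) + k)) * ∑ i ∈ Finset.Icc 1 (n1 + k), X i ω)
    (W : Ω → ℝ)
    (hW : ∀ ω, W ω = ((n1 : ℝ) * n2 / n) * Y 0 ω
      + (((n1 : ℝ) + m) * ((n2 : ℝ) - m) / n) * Y m ω) :
    P {ω | W ω < 0} ≤ ENNReal.ofReal
      (Real.exp (-(2 * (n1 : ℝ) ^ 2 * (2 * (n2 : ℝ) - m) ^ 2 * (μ2 - μ1) ^ 2)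
        / (M ^ 2 * n * ((m : ℝ) * ((n : ℝ) - m - 4 * n1) + 4 * (n1 : ℝ) * ((n : ℝ) - n1))))) := by
  -- basic nat facts
  have hmn2 : m < n2 := by omega
  have hnm : n1 + m ≤ n := by omega
  have hn1n : n1 ≤ n := by omega
  -- real positivity facts
  have hn1R : (0:ℝ) < n1 := by exact_mod_cast hn1
  have hn2R : (0:ℝ) < n2 := by exact_mod_cast hn2
  have hnR : (0:ℝ) < n := by
    have h0 : 0 < n := by omega
    exact_mod_cast h0
  have h2nm : (0:ℝ) < (n2:ℝ) - m := by
    have : (m:ℝ) < n2 := by exact_mod_cast hmn2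
    linarith
  have hnmR : (0:ℝ) < (n1:ℝ) + m := by positivity
  have h2n2m : (0:ℝ) < 2 * (n2:ℝ) - m := by linarith
  have hnc : (n:ℝ) = (n1:ℝ) + n2 := by exact_mod_cast congrArg (Nat.cast : ℕ → ℝ) hn
  -- the coefficients
  set c : ℕ → ℝ := fun i => if i ≤ n1 then -(2*(n2:ℝ) - m)/n
    else if i ≤ n1 + m then ((n1:ℝ) - n2 + m)/n else (2*(n1:ℝ) + m)/n with hcdef
  have hc1 : ∀ i ∈ Finset.Ioc 0 n1, c i = -(2*(n2:ℝ) - m)/n := by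
    intro i hi
    have h := Finset.mem_Ioc.1 hi
    simp only [hcdef]
    rw [if_pos h.2]
  have hc2 : ∀ i ∈ Finset.Ioc n1 (n1+m), c i = ((n1:ℝ) - n2 + m)/n := by
    intro i hi
    have h := Finset.mem_Ioc.1 hi
    simp only [hcdef]
    rw [if_neg (by omega), if_pos h.2]
  have hc3 : ∀ i ∈ Finset.Ioc (n1+m) n, c i = (2*(n1:ℝ) + m)/n := by
    intro i hi
    have h := Finset.mem_Ioc.1 hi
    simp only [hcdef]
    rw [if_neg (by omega), if_neg (by omega)]
  -- interval conversions
  have e1 : Finset.Icc 1 n1 = Finset.Ioc 0 n1 := Finset.Icc_add_one_left_eq_Ioc 0 n1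
  have e2 : Finset.Icc (n1+1) n = Finset.Ioc n1 n := Finset.Icc_add_one_left_eq_Ioc n1 n
  have e3 : Finset.Icc 1 (n1+m) = Finset.Ioc 0 (n1+m) := Finset.Icc_add_one_left_eq_Ioc 0 (n1+m)
  have e4 : Finset.Icc (n1+m+1) n = Finset.Ioc (n1+m) n := Finset.Icc_add_one_left_eq_Ioc (n1+m) n
  have e0 : Finset.Icc 1 n = Finset.Ioc 0 n := Finset.Icc_add_one_left_eq_Ioc 0 n
  -- membership helpers
  have mem1 : ∀ i ∈ Finset.Ioc 0 n, i ∈ Finset.Icc 1 n := by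
    intro i hi; have h := Finset.mem_Ioc.1 hi; exact Finset.mem_Icc.2 ⟨h.1, h.2⟩
  -- W as a linear combination
  have hW' : ∀ ω, W ω = ∑ i ∈ Finset.Ioc 0 n, c i * X i ω := by
    intro ω
    have s1 : ∑ i ∈ Finset.Ioc n1 n, X i ω
        = (∑ i ∈ Finset.Ioc n1 (n1+m), X i ω) + ∑ i ∈ Finset.Ioc (n1+m) n, X i ω :=
      (Finset.sum_Ioc_consecutive _ (Nat.le_add_right n1 m) hnm).symm
    have s2 : ∑ i ∈ Finset.Ioc 0 (n1+m), X i ω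
        = (∑ i ∈ Finset.Ioc 0 n1, X i ω) + ∑ i ∈ Finset.Ioc n1 (n1+m), X i ω :=
      (Finset.sum_Ioc_consecutive _ (Nat.zero_le n1) (Nat.le_add_right n1 m)).symm
    have s3 : ∑ i ∈ Finset.Ioc 0 n, (c i * X i ω)
        = (-(2*(n2:ℝ) - m)/n) * (∑ i ∈ Finset.Ioc 0 n1, X i ω)
          + (((n1:ℝ) - n2 + m)/n) * (∑ i ∈ Finset.Ioc n1 (n1+m), X i ω)
          + ((2*(n1:ℝ) + m)/n) * (∑ i ∈ Finset.Ioc (n1+m) n, X i ω) := by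
      rw [← Finset.sum_Ioc_consecutive _ (Nat.zero_le (n1+m)) hnm,
          ← Finset.sum_Ioc_consecutive _ (Nat.zero_le n1) (Nat.le_add_right n1 m)]
      rw [Finset.sum_congr rfl (fun i hi => by rw [hc1 i hi] :
            ∀ i ∈ Finset.Ioc 0 n1, c i * X i ω = -(2*(n2:ℝ) - m)/n * X i ω),
          Finset.sum_congr rfl (fun i hi => by rw [hc2 i hi] :
            ∀ i ∈ Finset.Ioc n1 (n1+m), c i * X i ω = ((n1:ℝ) - n2 + m)/n * X i ω),
          Finset.sum_congr rfl (fun i hi => by rw [hc3 i hi] :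
            ∀ i ∈ Finset.Ioc (n1+m) n, c i * X i ω = (2*(n1:ℝ) + m)/n * X i ω),
          ← Finset.mul_sum, ← Finset.mul_sum, ← Finset.mul_sum]
    rw [hW ω, hY 0 ω, hY m ω]
    simp only [Nat.add_zero, Nat.cast_zero, sub_zero, add_zero]
    rw [e1, e2, e3, e4, s1, s2, s3]
    field_simp
    ring
  -- expected value of W
  set EW : ℝ := ((n1:ℝ) * (2*(n2:ℝ) - m) * (μ2 - μ1)) / n with hEWdef
  have hEWpos : 0 < EW := by
    apply div_pos _ hnR
    exact mul_pos (mul_pos hn1R h2n2m) hΔμ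
  have hμS1 : ∀ i ∈ Finset.Ioc 0 n1, ∫ ω, X i ω ∂P = μ1 := by
    intro i hi
    exact hmean1 i (e1 ▸ hi)
  have hμS2 : ∀ i ∈ Finset.Ioc n1 (n1+m), ∫ ω, X i ω ∂P = μ2 := by
    intro i hi
    have h := Finset.mem_Ioc.1 hi
    exact hmean2 i (Finset.mem_Icc.2 ⟨by omega, by omega⟩)
  have hμS3 : ∀ i ∈ Finset.Ioc (n1+m) n, ∫ ω, X i ω ∂P = μ2 := by
    intro i hi
    have h := Finset.mem_Ioc.1 hi
    exact hmean2 i (Finset.mem_Icc.2 ⟨by omega, h.2⟩)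
  have hEW : ∑ i ∈ Finset.Ioc 0 n, c i * (∫ ω, X i ω ∂P) = EW := by
    rw [← Finset.sum_Ioc_consecutive _ (Nat.zero_le (n1+m)) hnm,
        ← Finset.sum_Ioc_consecutive _ (Nat.zero_le n1) (Nat.le_add_right n1 m)]
    rw [Finset.sum_congr rfl (fun i hi => by rw [hc1 i hi, hμS1 i hi] :
          ∀ i ∈ Finset.Ioc 0 n1, c i * (∫ ω, X i ω ∂P) = -(2*(n2:ℝ) - m)/n * μ1),
        Finset.sum_congr rfl (fun i hi => by rw [hc2 i hi, hμS2 i hi] :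
          ∀ i ∈ Finset.Ioc n1 (n1+m), c i * (∫ ω, X i ω ∂P) = ((n1:ℝ) - n2 + m)/n * μ2),
        Finset.sum_congr rfl (fun i hi => by rw [hc3 i hi, hμS3 i hi] :
          ∀ i ∈ Finset.Ioc (n1+m) n, c i * (∫ ω, X i ω ∂P) = (2*(n1:ℝ) + m)/n * μ2)]
    rw [Finset.sum_const, Finset.sum_const, Finset.sum_const]
    simp only [Nat.card_Ioc, Nat.sub_zero, nsmul_eq_mul, Nat.add_sub_cancel_left]
    have hc3' : ((n - (n1 + m) : ℕ) : ℝ) = (n:ℝ) - n1 - m := by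
      push_cast [Nat.cast_sub hnm]; ring
    rw [hc3', hEWdef, hnc]
    field_simp
    ring
  -- sum of squared coefficients
  set Ssum : ℝ := (n1:ℝ)*(2*(n2:ℝ) - m)^2 + (m:ℝ)*((n1:ℝ) - n2 + m)^2
    + ((n2:ℝ) - m)*(2*(n1:ℝ) + m)^2 with hSdef
  have hS : 0 < Ssum := by
    have h1 : 0 < (n1:ℝ)*(2*(n2:ℝ) - m)^2 := mul_pos hn1R (by positivity)
    have h2 : 0 ≤ (m:ℝ)*((n1:ℝ) - n2 + m)^2 := mul_nonneg (Nat.cast_nonneg m) (sq_nonneg _)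
    have h3 : 0 ≤ ((n2:ℝ) - m)*(2*(n1:ℝ) + m)^2 := mul_nonneg h2nm.le (sq_nonneg _)
    rw [hSdef]; linarith
  have hVsum : ∑ i ∈ Finset.Ioc 0 n, (c i)^2 = Ssum / (n:ℝ)^2 := by
    rw [← Finset.sum_Ioc_consecutive _ (Nat.zero_le (n1+m)) hnm,
        ← Finset.sum_Ioc_consecutive _ (Nat.zero_le n1) (Nat.le_add_right n1 m)]
    rw [Finset.sum_congr rfl (fun i hi => by rw [hc1 i hi] :
          ∀ i ∈ Finset.Ioc 0 n1, (c i)^2 = (-(2*(n2:ℝ) - m)/n)^2),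
        Finset.sum_congr rfl (fun i hi => by rw [hc2 i hi] :
          ∀ i ∈ Finset.Ioc n1 (n1+m), (c i)^2 = (((n1:ℝ) - n2 + m)/n)^2),
        Finset.sum_congr rfl (fun i hi => by rw [hc3 i hi] :
          ∀ i ∈ Finset.Ioc (n1+m) n, (c i)^2 = ((2*(n1:ℝ) + m)/n)^2)]
    rw [Finset.sum_const, Finset.sum_const, Finset.sum_const]
    simp only [Nat.card_Ioc, Nat.sub_zero, nsmul_eq_mul, Nat.add_sub_cancel_left]
    have hc3' : ((n - (n1 + m) : ℕ) : ℝ) = (n:ℝ) - n1 - m := by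
      push_cast [Nat.cast_sub hnm]; ring
    rw [hc3', hSdef, hnc]
    field_simp
    ring
  set V : ℝ := M^2 * (Ssum / (n:ℝ)^2) with hVdef
  have hV : 0 < V := mul_pos (by positivity) (div_pos hS (by positivity))
  set t : ℝ := -4 * EW / V with htdef
  have ht : t ≤ 0 := le_of_lt (div_neg_of_neg_of_pos (by linarith) hV)
  -- centered variables
  set Z : ℕ → Ω → ℝ := fun i ω => c i * (X i ω - ∫ ω', X i ω' ∂P) with hZdef
  have hZmeas : ∀ i, Measurable (Z i) := fun i => ((hXmeas i).sub_const _).const_mul _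
  have hZindep : iIndepFun Z P := by
    exact hindep.comp (fun i x => c i * (x - ∫ ω', X i ω' ∂P))
      (fun i => (measurable_id.sub_const _).const_mul _)
  have hZint : ∀ i ∈ Finset.Ioc 0 n, Integrable (fun ω => Real.exp (t * Z i ω)) P := by
    intro i hi
    have hb := hbdd i (mem1 i hi)
    refine Integrable.mono' (integrable_const
      (Real.exp (|t| * (|c i| * (M/2 + |∫ ω', X i ω' ∂P|)))))
      ((Real.measurable_exp.comp ((hZmeas i).const_mul t)).aestronglyMeasurable) ?_
    filter_upwards [hb] with ω hω
    rw [Real.norm_eq_abs, abs_of_pos (Real.exp_pos _), Real.exp_le_exp]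
    calc t * Z i ω ≤ |t * Z i ω| := le_abs_self _
      _ = |t| * |Z i ω| := abs_mul _ _
      _ ≤ |t| * (|c i| * (M/2 + |∫ ω', X i ω' ∂P|)) := by
          apply mul_le_mul_of_nonneg_left _ (abs_nonneg t)
          rw [hZdef]
          simp only [abs_mul]
          apply mul_le_mul_of_nonneg_left _ (abs_nonneg (c i))
          calc |X i ω - ∫ ω', X i ω' ∂P| ≤ |X i ω| + |∫ ω', X i ω' ∂P| := abs_sub _ _
            _ ≤ M/2 + |∫ ω', X i ω' ∂P| := by linarith
  -- mgf bound for each centered variable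
  have hmgf_each : ∀ i ∈ Finset.Ioc 0 n, mgf (Z i) P t ≤ Real.exp (t^2 * ((c i)^2 * M^2) / 8) :=
    fun i hi => hoeff_mgf_scaled P (X i) (hXmeas i) M (hbdd i (mem1 i hi)) (hint i (mem1 i hi)) (c i) t
  -- the sum of centered variables
  have hsum_apply : ∀ ω, (∑ i ∈ Finset.Ioc 0 n, Z i) ω = W ω - EW := by
    intro ω
    rw [Finset.sum_apply, hW' ω, ← hEW, ← Finset.sum_sub_distrib]
    exact Finset.sum_congr rfl fun i _ => by rw [hZdef]; ring
  have hsubset : {ω | W ω < 0} ⊆ {ω | (∑ i ∈ Finset.Ioc 0 n, Z i) ω ≤ -EW} := by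
    intro ω hω
    simp only [Set.mem_setOf_eq] at *
    rw [hsum_apply]
    linarith
  have hintsum : Integrable (fun ω => Real.exp (t * (∑ i ∈ Finset.Ioc 0 n, Z i) ω)) P :=
    hZindep.integrable_exp_mul_sum hZmeas hZint
  have hcher := measure_le_le_exp_mul_mgf (μ := P) (X := ∑ i ∈ Finset.Ioc 0 n, Z i) (-EW) ht hintsum
  have hmgfsum : mgf (∑ i ∈ Finset.Ioc 0 n, Z i) P t ≤ Real.exp (t^2 * V / 8) := by
    rw [hZindep.mgf_sum hZmeas]
    calc ∏ i ∈ Finset.Ioc 0 n, mgf (Z i) P t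
        ≤ ∏ i ∈ Finset.Ioc 0 n, Real.exp (t^2 * ((c i)^2 * M^2) / 8) :=
          Finset.prod_le_prod (fun i _ => mgf_nonneg) hmgf_each
      _ = Real.exp (∑ i ∈ Finset.Ioc 0 n, t^2 * ((c i)^2 * M^2) / 8) := (Real.exp_sum _ _).symm
      _ = Real.exp (t^2 * V / 8) := by
          congr 1
          rw [Finset.sum_congr rfl (fun i _ => by ring :
            ∀ i ∈ Finset.Ioc 0 n, t^2 * ((c i)^2 * M^2) / 8 = (t^2 * M^2 / 8) * (c i)^2),
            ← Finset.mul_sum, hVsum, hVdef]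
          ring
  -- the exponent computation
  have hexp_eq : t * EW + t^2 * V / 8 = -(2 * (n1:ℝ)^2 * (2*(n2:ℝ) - m)^2 * (μ2 - μ1)^2)
      / (M^2 * n * ((m:ℝ) * ((n:ℝ) - m - 4*n1) + 4*(n1:ℝ) * ((n:ℝ) - n1))) := by
    have hmm0 : (0:ℝ) ≤ m := Nat.cast_nonneg m
    have hmb : (m:ℝ) < n2 := by exact_mod_cast hmn2
    exact exp_alg (n1:ℝ) (n2:ℝ) (m:ℝ) M (μ2 - μ1) (n:ℝ) Ssum EW V t
      hn1R hn2R hmm0 hmb hM hΔμ hnc hSdef hEWdef hVdef htdef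
  -- put it together
  calc P {ω | W ω < 0} ≤ P {ω | (∑ i ∈ Finset.Ioc 0 n, Z i) ω ≤ -EW} := measure_mono hsubset
    _ = ENNReal.ofReal ((P {ω | (∑ i ∈ Finset.Ioc 0 n, Z i) ω ≤ -EW}).toReal) :=
        (ENNReal.ofReal_toReal (measure_ne_top P _)).symm
    _ ≤ ENNReal.ofReal (Real.exp (-(2 * (n1:ℝ)^2 * (2*(n2:ℝ) - m)^2 * (μ2 - μ1)^2)
        / (M^2 * n * ((m:ℝ) * ((n:ℝ) - m - 4*n1) + 4*(n1:ℝ) * ((n:ℝ) - n1))))) := by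
        apply ENNReal.ofReal_le_ofReal
        calc (P {ω | (∑ i ∈ Finset.Ioc 0 n, Z i) ω ≤ -EW}).toReal
            ≤ Real.exp (-t * -EW) * mgf (∑ i ∈ Finset.Ioc 0 n, Z i) P t := hcher
          _ ≤ Real.exp (t * EW) * Real.exp (t^2 * V / 8) := by
              rw [show -t * -EW = t * EW by ring]
              exact mul_le_mul_of_nonneg_left hmgfsum (Real.exp_pos _).le
          _ = Real.exp (t * EW + t^2 * V / 8) := (Real.exp_add _ _).symm
          _ = _ := by rw [hexp_eq]
end

section
/- Let n1 ≥ 1, n2 ≥ 2 be integers, n = n1 + n2, and let m be an integer with 1 ≤ m ≤ n2 − 1. Then m·(n−m−4n1) + 4·n1·(n−n1) > 0 and (2n2 − m)²·(n − m) ≥ m·( m·(n−m−4n1) + 4·n1·(n−n1) ). Consequently, exp( −2·n1²·(2n2−m)²·Δμ² / (M²·n·(m·(n−m−4n1)+4·n1·(n−n1))) ) ≤ exp( −2·n1²·m·Δμ² / (M²·n·(n−m)) ) for all reals Δμ and M > 0. -/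
/-- The Hoeffding bound `B⁺` on `P(W_m^+ < 0)` is at most the bound `B⁻` on
`P(W_m^- < 0)` throughout the feasible range `1 ≤ m ≤ n₂ - 1`: the denominator
`m(n-m-4n₁)+4n₁(n-n₁)` is positive, `(2n₂-m)²(n-m) ≥ m(m(n-m-4n₁)+4n₁(n-n₁))`,
and consequently `B⁺ ≤ B⁻`. -/
theorem hoeffding_bound_comparison
    (n1 n2 n : ℕ) (hn1 : 1 ≤ n1) (hn2 : 2 ≤ n2) (hn : n = n1 + n2)
    (m : ℕ) (hm1 : 1 ≤ m) (hm : m ≤ n2 - 1) :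
    (0 : ℝ) < (m : ℝ) * ((n : ℝ) - m - 4 * n1) + 4 * (n1 : ℝ) * ((n : ℝ) - n1)
    ∧ (m : ℝ) * ((m : ℝ) * ((n : ℝ) - m - 4 * n1) + 4 * (n1 : ℝ) * ((n : ℝ) - n1))
        ≤ (2 * (n2 : ℝ) - m) ^ 2 * ((n : ℝ) - m)
    ∧ ∀ (Δμ M : ℝ), 0 < M →
      Real.exp (-(2 * (n1 : ℝ) ^ 2 * (2 * (n2 : ℝ) - m) ^ 2 * Δμ ^ 2)
          / (M ^ 2 * n * ((m : ℝ) * ((n : ℝ) - m - 4 * n1) + 4 * (n1 : ℝ) * ((n : ℝ) - n1))))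
        ≤ Real.exp (-(2 * (n1 : ℝ) ^ 2 * (m : ℝ) * Δμ ^ 2)
          / (M ^ 2 * n * ((n : ℝ) - m))) := by
  have hm2 : m + 1 ≤ n2 := by omega
  have hmr : (m:ℝ) + 1 ≤ (n2:ℝ) := by exact_mod_cast hm2
  have hn1r : (1:ℝ) ≤ (n1:ℝ) := by exact_mod_cast hn1
  have hmr1 : (1:ℝ) ≤ (m:ℝ) := by exact_mod_cast hm1
  have hnr : (n:ℝ) = (n1:ℝ) + (n2:ℝ) := by rw [hn]; push_cast; ring
  have hnpos : (0:ℝ) < (n:ℝ) := by nlinarith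
  have hD : (0 : ℝ) < (m : ℝ) * ((n : ℝ) - m - 4 * n1) + 4 * (n1 : ℝ) * ((n : ℝ) - n1) := by
    nlinarith [sq_nonneg ((m:ℝ) - 1)]
  have hnm : (0:ℝ) < (n:ℝ) - m := by nlinarith
  have hkey : (m : ℝ) * ((m : ℝ) * ((n : ℝ) - m - 4 * n1) + 4 * (n1 : ℝ) * ((n : ℝ) - n1))
        ≤ (2 * (n2 : ℝ) - m) ^ 2 * ((n : ℝ) - m) := by
    rw [hnr]
    nlinarith [mul_nonneg (by nlinarith : (0:ℝ) ≤ (n1:ℝ)+(n2:ℝ)) (sq_nonneg ((n2:ℝ) - m))]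
  refine ⟨hD, hkey, ?_⟩
  intro dm M hM
  apply Real.exp_le_exp.mpr
  rw [div_le_div_iff₀ (by positivity) (by positivity)]
  have h0 : (0:ℝ) ≤ M^2 * n * (2 * (n1:ℝ)^2 * dm^2) := by positivity
  nlinarith [mul_le_mul_of_nonneg_left hkey h0]
end

section
/- Let (Ω, F, P) be a probability space and X_1,…,X_n independent real-valued random variables with |X_i| ≤ M/2 almost surely for some M > 0, E[X_i] = μ1 for 1 ≤ i ≤ n1 and E[X_i] = μ2 for n1 < i ≤ n, where n1, n2 ≥ 1, n = n1 + n2, and Δμ := μ2 − μ1 ≠ 0. Set C = 2·Δμ²·n1² / (M²·n²). Let δ ∈ (0,1) and let m0 be any integer with m0 ≥ log(2·n2/δ)/C and 1 ≤ m0 ≤ n2 − 1. Then P( there exists an integer m with m0 ≤ m ≤ n2 − 1 such that g(0) < g(m) ) ≤ δ; in particular, the probability that the detected split point i* = argmax_{0 ≤ m ≤ n2−1} g(m) is at least m0 samples to the right of the true boundary n1 is at most δ. -/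
open MeasureTheory ProbabilityTheory Real

/-- Core analytic inequality behind Hoeffding's lemma. -/
lemma hoeffding_core (p : ℝ) (hp0 : 0 ≤ p) (hp1 : p ≤ 1) (u : ℝ) :
    1 - p + p * Real.exp u ≤ Real.exp (p * u + u ^ 2 / 8) := by
  set d : ℝ → ℝ := fun u => 1 - p + p * Real.exp u with hd_def
  have hd : ∀ v : ℝ, 0 < d v := by
    intro v
    rcases eq_or_lt_of_le hp0 with h | h
    · simp [hd_def, ← h]
    · have := exp_pos v
      have : 0 < p * Real.exp v := mul_pos h this
      simp only [hd_def]; nlinarith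
  have hd' : ∀ v : ℝ, HasDerivAt d (p * Real.exp v) v := by
    intro v
    exact ((Real.hasDerivAt_exp v).const_mul p).const_add (1 - p)
  set G : ℝ → ℝ := fun v => v ^ 2 / 8 + p * v - Real.log (d v) with hG_def
  set G' : ℝ → ℝ := fun v => v / 4 + p - p * Real.exp v / d v with hG'_def
  have hG' : ∀ v : ℝ, HasDerivAt G (G' v) v := by
    intro v
    have h1 : HasDerivAt (fun v : ℝ => v ^ 2 / 8) (v / 4) v := by
      have := (hasDerivAt_pow 2 v).div_const 8
      simpa using this.congr_deriv (by ring)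
    have h2 : HasDerivAt (fun v : ℝ => p * v) p v := by
      simpa using (hasDerivAt_id v).const_mul p
    have h3 : HasDerivAt (fun v => Real.log (d v)) (p * Real.exp v / d v) v :=
      (hd' v).log (hd v).ne'
    exact (h1.add h2).sub h3
  have hG'' : ∀ v : ℝ, HasDerivAt G' (1/4 - p * (1 - p) * Real.exp v / (d v) ^ 2) v := by
    intro v
    have h1 : HasDerivAt (fun v : ℝ => v / 4 + p) (1/4) v := by
      simpa using ((hasDerivAt_id v).div_const 4).add_const p
    have h2 : HasDerivAt (fun v => p * Real.exp v / d v)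
        ((p * Real.exp v * d v - p * Real.exp v * (p * Real.exp v)) / (d v) ^ 2) v :=
      ((Real.hasDerivAt_exp v).const_mul p).div (hd' v) (hd v).ne'
    have := h1.sub h2
    apply this.congr_deriv
    have hdv := (hd v).ne'
    field_simp [hd_def]
    ring
  have hG'nonneg : ∀ v : ℝ, 0 ≤ 1/4 - p * (1 - p) * Real.exp v / (d v) ^ 2 := by
    intro v
    rw [sub_nonneg, div_le_iff₀ (pow_pos (hd v) 2)]
    have h := sq_nonneg ((1 - p) - p * Real.exp v)
    simp only [hd_def]
    nlinarith [exp_pos v]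
  have hG'mono : Monotone G' := monotone_of_hasDerivAt_nonneg hG'' hG'nonneg
  have hG'0 : G' 0 = 0 := by simp [hG'_def, hd_def]
  have hG0 : G 0 = 0 := by simp [hG_def, hd_def]
  have hGnonneg : ∀ v : ℝ, 0 ≤ G v := by
    intro v
    rcases le_total 0 v with h | h
    · have hmono : MonotoneOn G (Set.Ici 0) := by
        apply monotoneOn_of_hasDerivWithinAt_nonneg (convex_Ici 0)
          (fun x _ => (hG' x).continuousAt.continuousWithinAt)
          (fun x _ => (hG' x).hasDerivWithinAt)
        intro x hx
        rw [interior_Ici] at hx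
        have := hG'mono (le_of_lt hx)
        rw [hG'0] at this
        exact this
      have := hmono (Set.self_mem_Ici) (Set.mem_Ici.mpr h) h
      rwa [hG0] at this
    · have hanti : AntitoneOn G (Set.Iic 0) := by
        apply antitoneOn_of_hasDerivWithinAt_nonpos (convex_Iic 0)
          (fun x _ => (hG' x).continuousAt.continuousWithinAt)
          (fun x _ => (hG' x).hasDerivWithinAt)
        intro x hx
        rw [interior_Iic] at hx
        have := hG'mono (le_of_lt hx)
        rw [hG'0] at this
        exact this
      have := hanti (Set.mem_Iic.mpr h) (Set.self_mem_Iic) h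
      rwa [hG0] at this
  have hlog : Real.log (d u) ≤ p * u + u ^ 2 / 8 := by
    have := hGnonneg u
    simp only [hG_def] at this
    linarith
  calc d u = Real.exp (Real.log (d u)) := (Real.exp_log (hd u)).symm
    _ ≤ Real.exp (p * u + u ^ 2 / 8) := Real.exp_le_exp.mpr hlog

/-- Hoeffding's lemma. -/
lemma hoeffding_mgf {Ω : Type*} [MeasurableSpace Ω] (P : Measure Ω) [IsProbabilityMeasure P]
    (V : Ω → ℝ) (hmeas : AEStronglyMeasurable V P) (a b : ℝ) (hab : a < b)
    (hbdd : ∀ᵐ ω ∂P, V ω ∈ Set.Icc a b) (hVint : Integrable V P)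
    (hmean : ∫ ω, V ω ∂P = 0) (t : ℝ) :
    mgf V P t ≤ Real.exp (t ^ 2 * (b - a) ^ 2 / 8) := by
  have hba : (0:ℝ) < b - a := by linarith
  have ha : a ≤ 0 := by
    have h := integral_mono_ae (integrable_const a) hVint (hbdd.mono fun ω h => h.1)
    simpa [hmean] using h
  have hb : 0 ≤ b := by
    have h := integral_mono_ae hVint (integrable_const b) (hbdd.mono fun ω h => h.2)
    simpa [hmean] using h
  set p : ℝ := -a / (b - a) with hp_def
  have hp0 : 0 ≤ p := div_nonneg (by linarith) hba.le
  have hp1 : p ≤ 1 := by rw [div_le_one hba]; linarith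
  -- pointwise chord bound
  have hptwise : ∀ᵐ ω ∂P, Real.exp (t * V ω) ≤
      Real.exp (t * a) / (b - a) * (b - V ω) + Real.exp (t * b) / (b - a) * (V ω - a) := by
    filter_upwards [hbdd] with ω hω
    obtain ⟨h1, h2⟩ := hω
    have hlam0 : 0 ≤ (b - V ω) / (b - a) := div_nonneg (by linarith) hba.le
    have hmu0 : 0 ≤ (V ω - a) / (b - a) := div_nonneg (by linarith) hba.le
    have hsum : (b - V ω) / (b - a) + (V ω - a) / (b - a) = 1 := by
      rw [← add_div, div_eq_one_iff_eq hba.ne']; ring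
    have hconv := convexOn_exp.2 (Set.mem_univ (t * a)) (Set.mem_univ (t * b))
      hlam0 hmu0 hsum
    simp only [smul_eq_mul] at hconv
    have harg : (b - V ω) / (b - a) * (t * a) + (V ω - a) / (b - a) * (t * b) = t * V ω := by
      field_simp
      ring
    rw [harg] at hconv
    calc Real.exp (t * V ω) ≤ (b - V ω) / (b - a) * Real.exp (t * a)
          + (V ω - a) / (b - a) * Real.exp (t * b) := hconv
      _ = Real.exp (t * a) / (b - a) * (b - V ω) + Real.exp (t * b) / (b - a) * (V ω - a) := by
          ring
  have hexpmeas : AEStronglyMeasurable (fun ω => Real.exp (t * V ω)) P :=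
    Real.continuous_exp.comp_aestronglyMeasurable (hmeas.const_mul t)
  have hint_exp : Integrable (fun ω => Real.exp (t * V ω)) P := by
    apply Integrable.mono' (integrable_const (Real.exp (|t| * (|a| + |b|)))) hexpmeas
    filter_upwards [hbdd] with ω hω
    rw [Real.norm_eq_abs, Real.abs_exp]
    apply Real.exp_le_exp.mpr
    have hVabs : |V ω| ≤ |a| + |b| := by
      refine abs_le.2 ⟨?_, ?_⟩
      · have := neg_abs_le a; have := abs_nonneg b; linarith [hω.1]
      · have := le_abs_self b; have := abs_nonneg a; linarith [hω.2]
    calc t * V ω ≤ |t * V ω| := le_abs_self _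
      _ = |t| * |V ω| := abs_mul _ _
      _ ≤ |t| * (|a| + |b|) := mul_le_mul_of_nonneg_left hVabs (abs_nonneg t)
  have hi1 : Integrable (fun ω => Real.exp (t * a) / (b - a) * (b - V ω)) P :=
    ((integrable_const b).sub hVint).const_mul _
  have hi2 : Integrable (fun ω => Real.exp (t * b) / (b - a) * (V ω - a)) P :=
    (hVint.sub (integrable_const a)).const_mul _
  have hmgf_le : mgf V P t ≤ Real.exp (t * a) / (b - a) * b + Real.exp (t * b) / (b - a) * (-a) := by
    have h := integral_mono_ae hint_exp (hi1.add hi2) hptwise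
    rw [mgf]
    refine h.trans_eq ?_
    simp only [Pi.add_apply]
    rw [integral_add hi1 hi2, integral_const_mul, integral_const_mul,
      integral_sub (integrable_const b) hVint, integral_sub hVint (integrable_const a),
      hmean, integral_const]
    simp
  have hkey : Real.exp (t * a) / (b - a) * b + Real.exp (t * b) / (b - a) * (-a)
      = Real.exp (t * a) * (1 - p + p * Real.exp (t * (b - a))) := by
    have hexp : Real.exp (t * b) = Real.exp (t * a) * Real.exp (t * (b - a)) := by
      rw [← Real.exp_add]; ring_nf
    rw [hexp, hp_def]
    field_simp
    ring
  rw [hkey] at hmgf_le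
  have hcore := hoeffding_core p hp0 hp1 (t * (b - a))
  calc mgf V P t ≤ Real.exp (t * a) * (1 - p + p * Real.exp (t * (b - a))) := hmgf_le
    _ ≤ Real.exp (t * a) * Real.exp (p * (t * (b - a)) + (t * (b - a)) ^ 2 / 8) :=
        mul_le_mul_of_nonneg_left hcore (Real.exp_nonneg _)
    _ = Real.exp (t * a + (p * (t * (b - a)) + (t * (b - a)) ^ 2 / 8)) := by
        rw [← Real.exp_add]
    _ = Real.exp (t ^ 2 * (b - a) ^ 2 / 8) := by
        congr 1
        rw [hp_def]
        field_simp
        ring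

lemma integrable_exp_mul_of_bounded {Ω : Type*} [MeasurableSpace Ω] (P : Measure Ω)
    [IsProbabilityMeasure P] (W : Ω → ℝ) (hmeas : AEStronglyMeasurable W P) (B : ℝ)
    (hbdd : ∀ᵐ ω ∂P, |W ω| ≤ B) (t : ℝ) :
    Integrable (fun ω => Real.exp (t * W ω)) P := by
  apply Integrable.mono' (integrable_const (Real.exp (|t| * B)))
    (Real.continuous_exp.comp_aestronglyMeasurable (hmeas.const_mul t))
  filter_upwards [hbdd] with ω hω
  rw [Real.norm_eq_abs, Real.abs_exp]
  apply Real.exp_le_exp.mpr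
  calc t * W ω ≤ |t * W ω| := le_abs_self _
    _ = |t| * |W ω| := abs_mul _ _
    _ ≤ |t| * B := mul_le_mul_of_nonneg_left hω (abs_nonneg t)

/-- Hoeffding tail bound for a weighted sum of independent bounded random variables. -/
lemma chernoff_lower {Ω : Type*} [MeasurableSpace Ω] (P : Measure Ω) [IsProbabilityMeasure P]
    (X : ℕ → Ω → ℝ) (hXmeas : ∀ i, Measurable (X i))
    (hindep : iIndepFun X P)
    (M : ℝ) (hM : 0 < M) (s : Finset ℕ)
    (hbdd : ∀ i ∈ s, ∀ᵐ ω ∂P, |X i ω| ≤ M / 2)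
    (hint : ∀ i ∈ s, Integrable (X i) P)
    (mu : ℕ → ℝ) (hmu : ∀ i ∈ s, ∫ ω, X i ω ∂P = mu i)
    (c : ℕ → ℝ) (ε : ℝ) (hε : 0 < ε) (hc : 0 < ∑ i ∈ s, (c i) ^ 2) :
    P {ω | ∑ i ∈ s, c i * X i ω ≤ (∑ i ∈ s, c i * mu i) - ε}
      ≤ ENNReal.ofReal (Real.exp (-(2 * ε ^ 2 / (M ^ 2 * ∑ i ∈ s, (c i) ^ 2)))) := by
  classical
  set V : ℕ → Ω → ℝ := fun i ω => c i * (X i ω - mu i) with hV_def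
  have hVmeas : ∀ i, Measurable (V i) := fun i => ((hXmeas i).sub_const (mu i)).const_mul (c i)
  have hVindep : iIndepFun V P := by
    have := hindep.comp (fun i (x : ℝ) => c i * (x - mu i))
      (fun i => (measurable_id.sub_const (mu i)).const_mul (c i))
    exact this
  set κ : ℝ := M ^ 2 * ∑ i ∈ s, (c i) ^ 2 with hκ_def
  have hκpos : 0 < κ := mul_pos (by positivity) hc
  set t0 : ℝ := -(4 * ε) / κ with ht0_def
  have ht0 : t0 ≤ 0 := div_nonpos_of_nonpos_of_nonneg (by linarith) hκpos.le
  -- bounds on means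
  have hmu_bdd : ∀ i ∈ s, |mu i| ≤ M / 2 := by
    intro i hi
    rw [← hmu i hi]
    calc |∫ ω, X i ω ∂P| ≤ ∫ ω, |X i ω| ∂P := by
          rw [← Real.norm_eq_abs]
          refine (norm_integral_le_integral_norm _).trans ?_
          simp [Real.norm_eq_abs]
      _ ≤ ∫ _ω, M / 2 ∂P := integral_mono_ae (hint i hi).abs (integrable_const _) (hbdd i hi)
      _ = M / 2 := by simp
  have hVbdd : ∀ i ∈ s, ∀ᵐ ω ∂P, |V i ω| ≤ |c i| * M := by
    intro i hi
    filter_upwards [hbdd i hi] with ω hω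
    rw [hV_def]
    simp only [abs_mul]
    apply mul_le_mul_of_nonneg_left _ (abs_nonneg (c i))
    have := hmu_bdd i hi
    have h1 := abs_sub (X i ω) (mu i)
    calc |X i ω - mu i| ≤ |X i ω| + |mu i| := abs_sub _ _
      _ ≤ M / 2 + M / 2 := add_le_add hω this
      _ = M := by ring
  have hVint_exp : ∀ i ∈ s, Integrable (fun ω => Real.exp (t0 * V i ω)) P := fun i hi =>
    integrable_exp_mul_of_bounded P (V i) (hVmeas i).aestronglyMeasurable (|c i| * M)
      (hVbdd i hi) t0
  -- mgf bound for each summand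
  have hmgf_i : ∀ i ∈ s, mgf (V i) P t0 ≤ Real.exp (t0 ^ 2 * (c i) ^ 2 * M ^ 2 / 8) := by
    intro i hi
    rcases eq_or_ne (c i) 0 with hc0 | hc0
    · have : V i = fun _ => 0 := by funext ω; simp [hV_def, hc0]
      rw [this]
      simp only [mgf_const']
      simp
      positivity
    · have hVi : mgf (V i) P t0 = mgf (fun ω => X i ω - mu i) P (t0 * c i) := by
        unfold mgf
        congr 1
        funext ω
        simp only [hV_def]
        rw [← mul_assoc]
      rw [hVi]
      have h := hoeffding_mgf P (fun ω => X i ω - mu i)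
        (((hXmeas i).sub_const (mu i)).aestronglyMeasurable)
        (-(M/2) - mu i) (M/2 - mu i) (by linarith)
        (by filter_upwards [hbdd i hi] with ω hω
            have := abs_le.mp hω
            constructor <;> simp <;> linarith [this.1, this.2])
        ((hint i hi).sub (integrable_const (mu i)))
        (by rw [integral_sub (hint i hi) (integrable_const (mu i)), hmu i hi, integral_const]
            simp)
        (t0 * c i)
      refine h.trans_eq ?_
      congr 1
      ring
  -- mgf of the sum
  have hmgf_sum : mgf (∑ i ∈ s, V i) P t0 = ∏ i ∈ s, mgf (V i) P t0 :=
    hVindep.mgf_sum hVmeas s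
  have hmgf_sum_le : mgf (∑ i ∈ s, V i) P t0 ≤ Real.exp (t0 ^ 2 * κ / 8) := by
    rw [hmgf_sum]
    calc ∏ i ∈ s, mgf (V i) P t0 ≤ ∏ i ∈ s, Real.exp (t0 ^ 2 * (c i) ^ 2 * M ^ 2 / 8) :=
          Finset.prod_le_prod (fun i _ => mgf_nonneg) hmgf_i
      _ = Real.exp (∑ i ∈ s, t0 ^ 2 * (c i) ^ 2 * M ^ 2 / 8) := by
          rw [Real.exp_sum]
      _ = Real.exp (t0 ^ 2 * κ / 8) := by
          congr 1
          rw [hκ_def, Finset.mul_sum, Finset.mul_sum, ← Finset.sum_div]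
          congr 1
          exact Finset.sum_congr rfl fun i _ => by ring
  -- Chernoff
  have hint_exp_sum : Integrable (fun ω => Real.exp (t0 * (∑ i ∈ s, V i) ω)) P :=
    hVindep.integrable_exp_mul_sum hVmeas hVint_exp
  have hcher := measure_le_le_exp_mul_mgf (μ := P) (X := ∑ i ∈ s, V i) (-ε) ht0 hint_exp_sum
  -- event identification
  have hid : ∀ ω, (∑ i ∈ s, V i) ω = (∑ i ∈ s, c i * X i ω) - ∑ i ∈ s, c i * mu i := by
    intro ω
    simp only [Finset.sum_apply, hV_def]
    rw [← Finset.sum_sub_distrib]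
    exact Finset.sum_congr rfl fun i _ => by ring
  have hevent : {ω | ∑ i ∈ s, c i * X i ω ≤ (∑ i ∈ s, c i * mu i) - ε}
      = {ω | (∑ i ∈ s, V i) ω ≤ -ε} := by
    ext ω
    simp only [Set.mem_setOf_eq, hid ω]
    constructor <;> intro h <;> linarith
  rw [hevent]
  rw [ENNReal.le_ofReal_iff_toReal_le (measure_ne_top P _) (Real.exp_nonneg _)]
  refine hcher.trans ?_
  calc Real.exp (-t0 * -ε) * mgf (∑ i ∈ s, V i) P t0
      ≤ Real.exp (t0 * ε) * Real.exp (t0 ^ 2 * κ / 8) := by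
        rw [show -t0 * -ε = t0 * ε by ring]
        exact mul_le_mul_of_nonneg_left hmgf_sum_le (Real.exp_nonneg _)
    _ = Real.exp (t0 * ε + t0 ^ 2 * κ / 8) := by rw [← Real.exp_add]
    _ = Real.exp (-(2 * ε ^ 2 / κ)) := by
        congr 1
        rw [ht0_def]
        field_simp
        ring

/-- Splitting a sum over `Icc 1 n` into three consecutive blocks. -/
lemma sum_split3 (n1 m n : ℕ) (h2 : n1 + m ≤ n) (f : ℕ → ℝ) :
    ∑ i ∈ Finset.Icc 1 n, f i
      = (∑ i ∈ Finset.Icc 1 n1, f i) + (∑ i ∈ Finset.Icc (n1+1) (n1+m), f i)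
        + ∑ i ∈ Finset.Icc (n1+m+1) n, f i := by
  have e0 : Finset.Icc 1 n = Finset.Ioc 0 n := by rw [← Finset.Icc_add_one_left_eq_Ioc, zero_add]
  have e1 : Finset.Icc 1 n1 = Finset.Ioc 0 n1 := by rw [← Finset.Icc_add_one_left_eq_Ioc, zero_add]
  have e2 : Finset.Icc (n1+1) (n1+m) = Finset.Ioc n1 (n1+m) := by rw [← Finset.Icc_add_one_left_eq_Ioc]
  have e3 : Finset.Icc (n1+m+1) n = Finset.Ioc (n1+m) n := by rw [← Finset.Icc_add_one_left_eq_Ioc]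
  rw [e0, e1, e2, e3,
    Finset.sum_Ioc_consecutive _ (Nat.zero_le n1) (Nat.le_add_right n1 m),
    Finset.sum_Ioc_consecutive _ (Nat.zero_le (n1+m)) h2]

/-- Sum of a three-block step function against `f`. -/
lemma block_sum (n1 m n : ℕ) (h2 : n1 + m ≤ n) (x y z : ℝ) (f : ℕ → ℝ) :
    ∑ i ∈ Finset.Icc 1 n, (if i ≤ n1 then x else if i ≤ n1 + m then y else z) * f i
      = x * (∑ i ∈ Finset.Icc 1 n1, f i) + y * (∑ i ∈ Finset.Icc (n1+1) (n1+m), f i)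
        + z * ∑ i ∈ Finset.Icc (n1+m+1) n, f i := by
  rw [sum_split3 n1 m n h2 (fun i => (if i ≤ n1 then x else if i ≤ n1 + m then y else z) * f i),
    Finset.mul_sum, Finset.mul_sum, Finset.mul_sum]
  congr 1
  congr 1
  · refine Finset.sum_congr rfl fun i hi => ?_
    rw [Finset.mem_Icc] at hi
    rw [if_pos hi.2]
  · refine Finset.sum_congr rfl fun i hi => ?_
    rw [Finset.mem_Icc] at hi
    rw [if_neg (by omega), if_pos hi.2]
  · refine Finset.sum_congr rfl fun i hi => ?_
    rw [Finset.mem_Icc] at hi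
    rw [if_neg (by omega), if_neg (by omega)]

/-- The polynomial inequality for the second tail. -/
lemma keyB (a b mm : ℝ) (ha : 1 ≤ a) (hm : 1 ≤ mm) (hmb : mm ≤ b - 1) :
    mm * (a * (2*b - mm)^2 + mm * (a - b + mm)^2 + (b - mm) * (2*a + mm)^2)
      ≤ (2*b - mm)^2 * (a + b)^2 := by
  nlinarith [sq_nonneg (b - mm), mul_nonneg (mul_nonneg (by linarith : (0:ℝ) ≤ a) (by linarith : (0:ℝ) ≤ b - mm)) (sq_nonneg (b - mm)),
    mul_nonneg (by linarith : (0:ℝ) ≤ b - mm) (sq_nonneg (b - mm)),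
    mul_pos (by linarith : (0:ℝ) < b) (mul_pos (by linarith : (0:ℝ) < b) (by linarith : (0:ℝ) < b)),
    mul_nonneg (mul_nonneg (by linarith : (0:ℝ) ≤ a - 1) (by linarith : (0:ℝ) ≤ b)) (sq_nonneg (b - mm)),
    mul_nonneg (mul_nonneg (by linarith : (0:ℝ) ≤ b) (by linarith : (0:ℝ) ≤ b)) (by linarith : (0:ℝ) ≤ b - mm),
    mul_nonneg (mul_nonneg (by linarith : (0:ℝ) ≤ mm) (by linarith : (0:ℝ) ≤ mm)) (by linarith : (0:ℝ) ≤ mm),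
    sq_nonneg (a*(b-mm)), mul_pos (mul_pos (by linarith : (0:ℝ) < a) (by linarith : (0:ℝ) < b)) (by linarith : (0:ℝ) < b)]

lemma expcmp1 (dd a b mm M : ℝ) (ha : 1 ≤ a) (hb : 1 ≤ b) (hm : 1 ≤ mm)
    (hmb : mm ≤ b - 1) (hM : 0 < M) (hdd : 0 < dd ^ 2) :
    2*dd^2*a^2/(M^2*(a+b)^2) * mm
      ≤ 2*(dd^2*a^2*mm^2/(a+b)^2)/(M^2*(mm*((a+b)-mm)/(a+b))) := by
  have hnn : (0:ℝ) < a + b := by linarith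
  have h2 : (0:ℝ) < (a+b) - mm := by linarith
  rw [div_mul_eq_mul_div, div_le_div_iff₀ (by positivity) (by positivity)]
  have hkey : (a + b) - mm ≤ a + b := by linarith
  have e1 : 2*dd^2*a^2*mm * (M^2*(mm*((a+b)-mm)/(a+b)))
      = (2*dd^2*a^2*M^2*mm^2) * (((a+b)-mm)/(a+b)) := by ring
  have e2 : 2*(dd^2*a^2*mm^2/(a+b)^2) * (M^2*(a+b)^2)
      = (2*dd^2*a^2*M^2*mm^2) * 1 := by field_simp
  rw [e1, e2]
  apply mul_le_mul_of_nonneg_left _ (by positivity)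
  rw [div_le_one hnn]
  linarith

lemma expcmp2 (dd a b mm M : ℝ) (ha : 1 ≤ a) (hb : 1 ≤ b) (hm : 1 ≤ mm)
    (hmb : mm ≤ b - 1) (hM : 0 < M) (hdd : 0 < dd ^ 2) :
    2*dd^2*a^2/(M^2*(a+b)^2) * mm
      ≤ 2*(dd^2*a^2*(2*b-mm)^2/(a+b)^2)
        /(M^2*((a*(2*b-mm)^2 + mm*(a-b+mm)^2 + (b-mm)*(2*a+mm)^2)/(a+b)^2)) := by
  have hnn : (0:ℝ) < a + b := by linarith
  have hq : (0:ℝ) < 2*b - mm := by linarith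
  have hSumpos : (0:ℝ) < a*(2*b-mm)^2 + mm*(a-b+mm)^2 + (b-mm)*(2*a+mm)^2 := by
    have h1 : 0 < a*(2*b-mm)^2 := by positivity
    have h2 : 0 ≤ mm*(a-b+mm)^2 := by positivity
    have h3 : 0 ≤ (b-mm)*(2*a+mm)^2 := by
      apply mul_nonneg (by linarith) (sq_nonneg _)
    linarith
  rw [div_mul_eq_mul_div, div_le_div_iff₀ (by positivity) (by positivity)]
  have hB := keyB a b mm ha hm hmb
  have e1 : 2*dd^2*a^2*mm * (M^2*((a*(2*b-mm)^2 + mm*(a-b+mm)^2 + (b-mm)*(2*a+mm)^2)/(a+b)^2))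
      = (2*dd^2*a^2*M^2/(a+b)^2) * (mm * (a*(2*b-mm)^2 + mm*(a-b+mm)^2 + (b-mm)*(2*a+mm)^2)) := by
    ring
  have e2 : 2*(dd^2*a^2*(2*b-mm)^2/(a+b)^2) * (M^2*(a+b)^2)
      = (2*dd^2*a^2*M^2/(a+b)^2) * ((2*b-mm)^2*(a+b)^2) := by field_simp
  rw [e1, e2]
  exact mul_le_mul_of_nonneg_left hB (by positivity)

/-- three-block step coefficient function -/
def stepc (n1 m : ℕ) (x y z : ℝ) : ℕ → ℝ :=
  fun i => if i ≤ n1 then x else if i ≤ n1 + m then y else z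

lemma stepc_sum (n1 m n : ℕ) (h2 : n1 + m ≤ n) (x y z : ℝ) (f : ℕ → ℝ) :
    ∑ i ∈ Finset.Icc 1 n, stepc n1 m x y z i * f i
      = x * (∑ i ∈ Finset.Icc 1 n1, f i) + y * (∑ i ∈ Finset.Icc (n1+1) (n1+m), f i)
        + z * ∑ i ∈ Finset.Icc (n1+m+1) n, f i := by
  rw [← block_sum n1 m n h2 x y z f]
  rfl

lemma stepc_sq_sum (n1 m n : ℕ) (h2 : n1 + m ≤ n) (x y z : ℝ) :
    ∑ i ∈ Finset.Icc 1 n, (stepc n1 m x y z i) ^ 2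
      = x ^ 2 * (∑ i ∈ Finset.Icc 1 n1, (1:ℝ))
        + y ^ 2 * (∑ i ∈ Finset.Icc (n1+1) (n1+m), (1:ℝ))
        + z ^ 2 * ∑ i ∈ Finset.Icc (n1+m+1) n, (1:ℝ) := by
  rw [← stepc_sum n1 m n h2 (x^2) (y^2) (z^2) (fun _ => (1:ℝ))]
  refine Finset.sum_congr rfl fun i _ => ?_
  unfold stepc
  split_ifs <;> ring

set_option maxHeartbeats 1000000 in
/-- Consistency of the two-segment split criterion: with
`C = 2Δμ²n₁²/(M²n²)`, `δ ∈ (0,1)`, and `m₀ ≥ log(2n₂/δ)/C`, the probability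
that `g(0) < g(m)` for some `m₀ ≤ m ≤ n₂ - 1` is at most `δ`; in particular,
the probability that the detected split point (the maximizer of `g`) is at
least `m₀` samples to the right of the true boundary `n₁` is at most `δ`. -/
theorem split_consistency
    {Ω : Type*} [MeasurableSpace Ω] (P : Measure Ω) [IsProbabilityMeasure P]
    (n1 n2 n : ℕ) (hn1 : 1 ≤ n1) (hn2 : 1 ≤ n2) (hn : n = n1 + n2)
    (X : ℕ → Ω → ℝ) (hXmeas : ∀ i, Measurable (X i))
    (hindep : iIndepFun X P)
    (M : ℝ) (hM : 0 < M)
    (hbdd : ∀ i ∈ Finset.Icc 1 n, ∀ᵐ ω ∂P, |X i ω| ≤ M / 2)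
    (hint : ∀ i ∈ Finset.Icc 1 n, Integrable (X i) P)
    (μ1 μ2 : ℝ) (hΔμ : μ2 - μ1 ≠ 0)
    (hmean1 : ∀ i ∈ Finset.Icc 1 n1, ∫ ω, X i ω ∂P = μ1)
    (hmean2 : ∀ i ∈ Finset.Icc (n1 + 1) n, ∫ ω, X i ω ∂P = μ2)
    (C : ℝ) (hC : C = 2 * (μ2 - μ1) ^ 2 * (n1 : ℝ) ^ 2 / (M ^ 2 * (n : ℝ) ^ 2))
    (Y : ℕ → Ω → ℝ)
    (hY : ∀ k ω, Y k ω = (1 / ((n2 : ℝ) - k)) * ∑ i ∈ Finset.Icc (n1 + k + 1) n, X i ω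
      - (1 / ((n1 : ℝ) + k)) * ∑ i ∈ Finset.Icc 1 (n1 + k), X i ω)
    (g : ℕ → Ω → ℝ)
    (hg : ∀ k ω, g k ω = (((n1 : ℝ) + k) * ((n2 : ℝ) - k) / n) * |Y k ω|)
    (δ : ℝ) (hδ0 : 0 < δ) (hδ1 : δ < 1)
    (m0 : ℕ) (hm0 : Real.log (2 * (n2 : ℝ) / δ) / C ≤ (m0 : ℝ))
    (hm01 : 1 ≤ m0) (hm02 : m0 ≤ n2 - 1) :
    P {ω | ∃ m : ℕ, m0 ≤ m ∧ m ≤ n2 - 1 ∧ g 0 ω < g m ω} ≤ ENNReal.ofReal δ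
    ∧ ∀ mstar : Ω → ℕ,
        (∀ ω, mstar ω ≤ n2 - 1 ∧
          ∀ m ≤ n2 - 1, m = mstar ω ∨ g m ω < g (mstar ω) ω) →
        P {ω | m0 ≤ mstar ω} ≤ ENNReal.ofReal δ := by

  classical
  -- basic real facts
  have hn1R : (1:ℝ) ≤ (n1:ℝ) := by exact_mod_cast hn1
  have hn2R : (1:ℝ) ≤ (n2:ℝ) := by exact_mod_cast hn2
  have hnR : (n:ℝ) = (n1:ℝ) + (n2:ℝ) := by rw [hn]; push_cast; ring
  have hnpos : (0:ℝ) < (n:ℝ) := by rw [hnR]; linarith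
  have hddsq : 0 < (μ2 - μ1) ^ 2 := by
    have := abs_pos.mpr hΔμ
    nlinarith [sq_abs (μ2 - μ1)]
  have hCpos : 0 < C := by
    rw [hC]; positivity
  -- sign
  set s0 : ℝ := if 0 < μ2 - μ1 then 1 else -1 with hs0_def
  have hs0sq : s0 ^ 2 = 1 := by
    rw [hs0_def]; split_ifs <;> norm_num
  have hs0abs : |s0| = 1 := by
    rw [hs0_def]; split_ifs <;> norm_num
  have hs0pos : 0 < s0 * (μ2 - μ1) := by
    rw [hs0_def]; split_ifs with h
    · linarith
    · rcases lt_or_gt_of_ne hΔμ with h' | h'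
      · nlinarith
      · exact absurd h' h
  -- the mean function
  set mu : ℕ → ℝ := fun i => if i ≤ n1 then μ1 else μ2 with hmufun_def
  have hmu : ∀ i ∈ Finset.Icc 1 n, ∫ ω, X i ω ∂P = mu i := by
    intro i hi
    rw [Finset.mem_Icc] at hi
    by_cases h : i ≤ n1
    · rw [hmufun_def]; simp only [if_pos h]
      exact hmean1 i (Finset.mem_Icc.mpr ⟨hi.1, h⟩)
    · rw [hmufun_def]; simp only [if_neg h]
      exact hmean2 i (Finset.mem_Icc.mpr ⟨by omega, hi.2⟩)
  -- the signed unnormalized criterion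
  set W : ℕ → Ω → ℝ := fun k ω => s0 * (((n1:ℝ)+(k:ℝ)) * (∑ i ∈ Finset.Icc (n1+k+1) n, X i ω)
      - ((n2:ℝ)-(k:ℝ)) * (∑ i ∈ Finset.Icc 1 (n1+k), X i ω)) / (n:ℝ) with hW_def
  have hgW : ∀ k, k < n2 → ∀ ω, g k ω = |W k ω| := by
    intro k hk ω
    have hkR : (k:ℝ) < (n2:ℝ) := by exact_mod_cast hk
    have h1 : (0:ℝ) < (n1:ℝ) + (k:ℝ) := by positivity
    have h2 : (0:ℝ) < (n2:ℝ) - (k:ℝ) := by linarith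
    rw [hg, hY, hW_def]
    simp only
    rw [abs_div, abs_mul, hs0abs, one_mul, abs_of_pos hnpos]
    have hQ : ((n1:ℝ)+k) * (∑ i ∈ Finset.Icc (n1+k+1) n, X i ω)
          - ((n2:ℝ)-k) * (∑ i ∈ Finset.Icc 1 (n1+k), X i ω)
        = (((n1:ℝ)+k) * ((n2:ℝ)-k)) * (1 / ((n2:ℝ) - k) * ∑ i ∈ Finset.Icc (n1+k+1) n, X i ω
          - 1 / ((n1:ℝ) + k) * ∑ i ∈ Finset.Icc 1 (n1+k), X i ω) := by
      field_simp
    rw [hQ, abs_mul, abs_of_nonneg (by positivity : (0:ℝ) ≤ ((n1:ℝ)+k)*((n2:ℝ)-k))]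
    ring

  -- per-m tail bound
  have hper : ∀ m : ℕ, 1 ≤ m → m ≤ n2 - 1 →
      P {ω | g 0 ω < g m ω}
        ≤ ENNReal.ofReal (Real.exp (-(C * (m:ℝ)))) + ENNReal.ofReal (Real.exp (-(C * (m:ℝ)))) := by
    intro m hm1 hm2
    have hmn2 : m < n2 := by omega
    have h2nat : n1 + m ≤ n := by omega
    have hmR : (1:ℝ) ≤ (m:ℝ) := by exact_mod_cast hm1
    have hmbR : (m:ℝ) ≤ (n2:ℝ) - 1 := by
      have : (m:ℝ) + 1 ≤ (n2:ℝ) := by exact_mod_cast hmn2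
      linarith
    -- block cardinalities
    have hone1 : ∑ i ∈ Finset.Icc 1 n1, (1:ℝ) = (n1:ℝ) := by
      rw [Finset.sum_const, Nat.card_Icc, nsmul_eq_mul, mul_one]
      norm_num
    have hone2 : ∑ i ∈ Finset.Icc (n1+1) (n1+m), (1:ℝ) = (m:ℝ) := by
      rw [Finset.sum_const, Nat.card_Icc, nsmul_eq_mul, mul_one]
      have e : n1 + m + 1 - (n1+1) = m := by omega
      rw [e]
    have hone3 : ∑ i ∈ Finset.Icc (n1+m+1) n, (1:ℝ) = (n2:ℝ) - (m:ℝ) := by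
      rw [Finset.sum_const, Nat.card_Icc, nsmul_eq_mul, mul_one]
      have e : n + 1 - (n1+m+1) = n2 - m := by omega
      rw [e, Nat.cast_sub hmn2.le]
    -- block sums of mu
    have hmuA1 : ∑ i ∈ Finset.Icc 1 n1, mu i = (n1:ℝ) * μ1 := by
      have h : ∀ i ∈ Finset.Icc 1 n1, mu i = μ1 := by
        intro i hi
        rw [hmufun_def]
        simp only [if_pos (Finset.mem_Icc.mp hi).2]
      rw [Finset.sum_congr rfl h, Finset.sum_const, Nat.card_Icc, nsmul_eq_mul]
      norm_num
    have hmuA2 : ∑ i ∈ Finset.Icc (n1+1) (n1+m), mu i = (m:ℝ) * μ2 := by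
      have h : ∀ i ∈ Finset.Icc (n1+1) (n1+m), mu i = μ2 := by
        intro i hi
        have := Finset.mem_Icc.mp hi
        rw [hmufun_def]
        simp only [if_neg (by omega : ¬ i ≤ n1)]
      rw [Finset.sum_congr rfl h, Finset.sum_const, Nat.card_Icc, nsmul_eq_mul]
      have e : n1 + m + 1 - (n1+1) = m := by omega
      rw [e]
    have hmuA3 : ∑ i ∈ Finset.Icc (n1+m+1) n, mu i = ((n2:ℝ) - (m:ℝ)) * μ2 := by
      have h : ∀ i ∈ Finset.Icc (n1+m+1) n, mu i = μ2 := by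
        intro i hi
        have := Finset.mem_Icc.mp hi
        rw [hmufun_def]
        simp only [if_neg (by omega : ¬ i ≤ n1)]
      rw [Finset.sum_congr rfl h, Finset.sum_const, Nat.card_Icc, nsmul_eq_mul]
      have e : n + 1 - (n1+m+1) = n2 - m := by omega
      rw [e, Nat.cast_sub hmn2.le]
    -- sum splits
    have hsplitT : ∀ f : ℕ → ℝ, ∑ i ∈ Finset.Icc (n1+1) n, f i
        = (∑ i ∈ Finset.Icc (n1+1) (n1+m), f i) + ∑ i ∈ Finset.Icc (n1+m+1) n, f i := by
      intro f
      have e1 : Finset.Icc (n1+1) n = Finset.Ioc n1 n := by rw [← Finset.Icc_add_one_left_eq_Ioc]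
      have e2 : Finset.Icc (n1+1) (n1+m) = Finset.Ioc n1 (n1+m) := by rw [← Finset.Icc_add_one_left_eq_Ioc]
      have e3 : Finset.Icc (n1+m+1) n = Finset.Ioc (n1+m) n := by rw [← Finset.Icc_add_one_left_eq_Ioc]
      rw [e1, e2, e3, Finset.sum_Ioc_consecutive _ (Nat.le_add_right n1 m) h2nat]
    have hsplitS : ∀ f : ℕ → ℝ, ∑ i ∈ Finset.Icc 1 (n1+m), f i
        = (∑ i ∈ Finset.Icc 1 n1, f i) + ∑ i ∈ Finset.Icc (n1+1) (n1+m), f i := by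
      intro f
      have e1 : Finset.Icc 1 (n1+m) = Finset.Ioc 0 (n1+m) := by rw [← Finset.Icc_add_one_left_eq_Ioc, zero_add]
      have e2 : Finset.Icc 1 n1 = Finset.Ioc 0 n1 := by rw [← Finset.Icc_add_one_left_eq_Ioc, zero_add]
      have e3 : Finset.Icc (n1+1) (n1+m) = Finset.Ioc n1 (n1+m) := by rw [← Finset.Icc_add_one_left_eq_Ioc]
      rw [e1, e2, e3, Finset.sum_Ioc_consecutive _ (Nat.zero_le n1) (Nat.le_add_right n1 m)]
    -- D identities
    have hDX : ∀ ω, ∑ i ∈ Finset.Icc 1 n,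
        stepc n1 m (s0*(-(m:ℝ)/(n:ℝ))) (s0*(((n:ℝ)-(m:ℝ))/(n:ℝ))) (s0*(-(m:ℝ)/(n:ℝ))) i * X i ω
          = W 0 ω - W m ω := by
      intro ω
      rw [stepc_sum n1 m n h2nat, hW_def]
      simp only [Nat.add_zero, Nat.cast_zero, add_zero, sub_zero]
      rw [hsplitT (fun i => X i ω), hsplitS (fun i => X i ω)]
      rw [hnR]
      field_simp
      ring
    have hDmu : ∑ i ∈ Finset.Icc 1 n,
        stepc n1 m (s0*(-(m:ℝ)/(n:ℝ))) (s0*(((n:ℝ)-(m:ℝ))/(n:ℝ))) (s0*(-(m:ℝ)/(n:ℝ))) i * mu i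
          = s0 * (μ2 - μ1) * (n1:ℝ) * (m:ℝ) / (n:ℝ) := by
      rw [stepc_sum n1 m n h2nat, hmuA1, hmuA2, hmuA3, hnR]
      field_simp
      ring
    have hDsq : ∑ i ∈ Finset.Icc 1 n,
        stepc n1 m (s0*(-(m:ℝ)/(n:ℝ))) (s0*(((n:ℝ)-(m:ℝ))/(n:ℝ))) (s0*(-(m:ℝ)/(n:ℝ))) i ^ 2
          = (m:ℝ)*((n:ℝ)-(m:ℝ))/(n:ℝ) := by
      rw [stepc_sq_sum n1 m n h2nat, hone1, hone2, hone3]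
      have hx2 : (s0*(-(m:ℝ)/(n:ℝ)))^2 = (m:ℝ)^2/(n:ℝ)^2 := by
        rw [mul_pow, hs0sq, one_mul, div_pow, neg_pow_two]
      have hy2 : (s0*(((n:ℝ)-(m:ℝ))/(n:ℝ)))^2 = ((n:ℝ)-(m:ℝ))^2/(n:ℝ)^2 := by
        rw [mul_pow, hs0sq, one_mul, div_pow]
      rw [hx2, hy2, hnR]
      field_simp
      ring
    have hnmpos : (0:ℝ) < (n:ℝ) - (m:ℝ) := by rw [hnR]; linarith
    have hDsqpos : (0:ℝ) < ∑ i ∈ Finset.Icc 1 n,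
        stepc n1 m (s0*(-(m:ℝ)/(n:ℝ))) (s0*(((n:ℝ)-(m:ℝ))/(n:ℝ))) (s0*(-(m:ℝ)/(n:ℝ))) i ^ 2 := by
      rw [hDsq]
      exact div_pos (mul_pos (by linarith) hnmpos) hnpos
    have hεD : (0:ℝ) < s0 * (μ2 - μ1) * (n1:ℝ) * (m:ℝ) / (n:ℝ) :=
      div_pos (mul_pos (mul_pos hs0pos (by linarith)) (by linarith)) hnpos
    have hP1 := chernoff_lower P X hXmeas hindep M hM (Finset.Icc 1 n) hbdd hint mu hmu
      (stepc n1 m (s0*(-(m:ℝ)/(n:ℝ))) (s0*(((n:ℝ)-(m:ℝ))/(n:ℝ))) (s0*(-(m:ℝ)/(n:ℝ))))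
      (s0 * (μ2 - μ1) * (n1:ℝ) * (m:ℝ) / (n:ℝ)) hεD hDsqpos
    rw [hDsq] at hP1
    have hcmp1 : C * (m:ℝ) ≤ 2 * (s0 * (μ2 - μ1) * (n1:ℝ) * (m:ℝ) / (n:ℝ)) ^ 2
        / (M^2 * ((m:ℝ)*((n:ℝ)-(m:ℝ))/(n:ℝ))) := by
      have he : (s0 * (μ2 - μ1) * (n1:ℝ) * (m:ℝ) / (n:ℝ)) ^ 2
          = (μ2-μ1)^2*(n1:ℝ)^2*(m:ℝ)^2/((n1:ℝ)+(n2:ℝ))^2 := by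
        rw [hnR, div_pow]
        congr 1
        rw [show s0*(μ2-μ1)*(n1:ℝ)*(m:ℝ) = s0*((μ2-μ1)*(n1:ℝ)*(m:ℝ)) by ring, mul_pow, hs0sq,
          one_mul]
        ring
      rw [he, hC, hnR]
      exact expcmp1 (μ2-μ1) (n1:ℝ) (n2:ℝ) (m:ℝ) M hn1R hn2R hmR hmbR hM hddsq
    have hE1 : P {ω | ∑ i ∈ Finset.Icc 1 n,
        stepc n1 m (s0*(-(m:ℝ)/(n:ℝ))) (s0*(((n:ℝ)-(m:ℝ))/(n:ℝ))) (s0*(-(m:ℝ)/(n:ℝ))) i * X i ω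
          ≤ (∑ i ∈ Finset.Icc 1 n,
            stepc n1 m (s0*(-(m:ℝ)/(n:ℝ))) (s0*(((n:ℝ)-(m:ℝ))/(n:ℝ))) (s0*(-(m:ℝ)/(n:ℝ))) i * mu i)
            - s0 * (μ2 - μ1) * (n1:ℝ) * (m:ℝ) / (n:ℝ)}
        ≤ ENNReal.ofReal (Real.exp (-(C * (m:ℝ)))) := by
      refine hP1.trans (ENNReal.ofReal_le_ofReal (Real.exp_le_exp.mpr ?_))
      linarith
    -- S identities
    have hSX : ∀ ω, ∑ i ∈ Finset.Icc 1 n,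
        stepc n1 m (s0*(-(2*(n2:ℝ)-(m:ℝ))/(n:ℝ))) (s0*(((n1:ℝ)-(n2:ℝ)+(m:ℝ))/(n:ℝ)))
          (s0*((2*(n1:ℝ)+(m:ℝ))/(n:ℝ))) i * X i ω
          = W 0 ω + W m ω := by
      intro ω
      rw [stepc_sum n1 m n h2nat, hW_def]
      simp only [Nat.add_zero, Nat.cast_zero, add_zero, sub_zero]
      rw [hsplitT (fun i => X i ω), hsplitS (fun i => X i ω)]
      rw [hnR]
      field_simp
      ring
    have hSmu : ∑ i ∈ Finset.Icc 1 n,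
        stepc n1 m (s0*(-(2*(n2:ℝ)-(m:ℝ))/(n:ℝ))) (s0*(((n1:ℝ)-(n2:ℝ)+(m:ℝ))/(n:ℝ)))
          (s0*((2*(n1:ℝ)+(m:ℝ))/(n:ℝ))) i * mu i
          = s0 * (μ2 - μ1) * (n1:ℝ) * (2*(n2:ℝ)-(m:ℝ)) / (n:ℝ) := by
      rw [stepc_sum n1 m n h2nat, hmuA1, hmuA2, hmuA3, hnR]
      field_simp
      ring
    have hSsq : ∑ i ∈ Finset.Icc 1 n,
        stepc n1 m (s0*(-(2*(n2:ℝ)-(m:ℝ))/(n:ℝ))) (s0*(((n1:ℝ)-(n2:ℝ)+(m:ℝ))/(n:ℝ)))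
          (s0*((2*(n1:ℝ)+(m:ℝ))/(n:ℝ))) i ^ 2
          = ((n1:ℝ)*(2*(n2:ℝ)-(m:ℝ))^2 + (m:ℝ)*((n1:ℝ)-(n2:ℝ)+(m:ℝ))^2
            + ((n2:ℝ)-(m:ℝ))*(2*(n1:ℝ)+(m:ℝ))^2)/((n1:ℝ)+(n2:ℝ))^2 := by
      rw [stepc_sq_sum n1 m n h2nat, hone1, hone2, hone3]
      have hx2 : (s0*(-(2*(n2:ℝ)-(m:ℝ))/(n:ℝ)))^2 = (2*(n2:ℝ)-(m:ℝ))^2/(n:ℝ)^2 := by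
        rw [mul_pow, hs0sq, one_mul, div_pow, neg_pow_two]
      have hy2 : (s0*(((n1:ℝ)-(n2:ℝ)+(m:ℝ))/(n:ℝ)))^2 = ((n1:ℝ)-(n2:ℝ)+(m:ℝ))^2/(n:ℝ)^2 := by
        rw [mul_pow, hs0sq, one_mul, div_pow]
      have hz2 : (s0*((2*(n1:ℝ)+(m:ℝ))/(n:ℝ)))^2 = (2*(n1:ℝ)+(m:ℝ))^2/(n:ℝ)^2 := by
        rw [mul_pow, hs0sq, one_mul, div_pow]
      rw [hx2, hy2, hz2, hnR]
      field_simp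
    have hSsqpos : (0:ℝ) < ∑ i ∈ Finset.Icc 1 n,
        stepc n1 m (s0*(-(2*(n2:ℝ)-(m:ℝ))/(n:ℝ))) (s0*(((n1:ℝ)-(n2:ℝ)+(m:ℝ))/(n:ℝ)))
          (s0*((2*(n1:ℝ)+(m:ℝ))/(n:ℝ))) i ^ 2 := by
      rw [hSsq]
      apply div_pos _ (by positivity)
      have h1 : (0:ℝ) < (n1:ℝ)*(2*(n2:ℝ)-(m:ℝ))^2 := by
        apply mul_pos (by linarith)
        have : (0:ℝ) < 2*(n2:ℝ)-(m:ℝ) := by linarith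
        positivity
      have h2 : (0:ℝ) ≤ (m:ℝ)*((n1:ℝ)-(n2:ℝ)+(m:ℝ))^2 := by positivity
      have h3 : (0:ℝ) ≤ ((n2:ℝ)-(m:ℝ))*(2*(n1:ℝ)+(m:ℝ))^2 :=
        mul_nonneg (by linarith) (sq_nonneg _)
      linarith
    have hεS : (0:ℝ) < s0 * (μ2 - μ1) * (n1:ℝ) * (2*(n2:ℝ)-(m:ℝ)) / (n:ℝ) :=
      div_pos (mul_pos (mul_pos hs0pos (by linarith)) (by linarith)) hnpos
    have hP2 := chernoff_lower P X hXmeas hindep M hM (Finset.Icc 1 n) hbdd hint mu hmu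
      (stepc n1 m (s0*(-(2*(n2:ℝ)-(m:ℝ))/(n:ℝ))) (s0*(((n1:ℝ)-(n2:ℝ)+(m:ℝ))/(n:ℝ)))
        (s0*((2*(n1:ℝ)+(m:ℝ))/(n:ℝ))))
      (s0 * (μ2 - μ1) * (n1:ℝ) * (2*(n2:ℝ)-(m:ℝ)) / (n:ℝ)) hεS hSsqpos
    rw [hSsq] at hP2
    have hcmp2 : C * (m:ℝ) ≤ 2 * (s0 * (μ2 - μ1) * (n1:ℝ) * (2*(n2:ℝ)-(m:ℝ)) / (n:ℝ)) ^ 2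
        / (M^2 * (((n1:ℝ)*(2*(n2:ℝ)-(m:ℝ))^2 + (m:ℝ)*((n1:ℝ)-(n2:ℝ)+(m:ℝ))^2
            + ((n2:ℝ)-(m:ℝ))*(2*(n1:ℝ)+(m:ℝ))^2)/((n1:ℝ)+(n2:ℝ))^2)) := by
      have he : (s0 * (μ2 - μ1) * (n1:ℝ) * (2*(n2:ℝ)-(m:ℝ)) / (n:ℝ)) ^ 2
          = (μ2-μ1)^2*(n1:ℝ)^2*(2*(n2:ℝ)-(m:ℝ))^2/((n1:ℝ)+(n2:ℝ))^2 := by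
        rw [hnR, div_pow]
        congr 1
        rw [show s0*(μ2-μ1)*(n1:ℝ)*(2*(n2:ℝ)-(m:ℝ))
          = s0*((μ2-μ1)*(n1:ℝ)*(2*(n2:ℝ)-(m:ℝ))) by ring, mul_pow, hs0sq, one_mul]
        ring
      rw [he, hC, hnR]
      exact expcmp2 (μ2-μ1) (n1:ℝ) (n2:ℝ) (m:ℝ) M hn1R hn2R hmR hmbR hM hddsq
    have hE2 : P {ω | ∑ i ∈ Finset.Icc 1 n,
        stepc n1 m (s0*(-(2*(n2:ℝ)-(m:ℝ))/(n:ℝ))) (s0*(((n1:ℝ)-(n2:ℝ)+(m:ℝ))/(n:ℝ)))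
          (s0*((2*(n1:ℝ)+(m:ℝ))/(n:ℝ))) i * X i ω
          ≤ (∑ i ∈ Finset.Icc 1 n,
            stepc n1 m (s0*(-(2*(n2:ℝ)-(m:ℝ))/(n:ℝ))) (s0*(((n1:ℝ)-(n2:ℝ)+(m:ℝ))/(n:ℝ)))
              (s0*((2*(n1:ℝ)+(m:ℝ))/(n:ℝ))) i * mu i)
            - s0 * (μ2 - μ1) * (n1:ℝ) * (2*(n2:ℝ)-(m:ℝ)) / (n:ℝ)}
        ≤ ENNReal.ofReal (Real.exp (-(C * (m:ℝ)))) := by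
      refine hP2.trans (ENNReal.ofReal_le_ofReal (Real.exp_le_exp.mpr ?_))
      linarith
    -- inclusion
    have hincl : {ω | g 0 ω < g m ω} ⊆
        {ω | ∑ i ∈ Finset.Icc 1 n,
          stepc n1 m (s0*(-(m:ℝ)/(n:ℝ))) (s0*(((n:ℝ)-(m:ℝ))/(n:ℝ))) (s0*(-(m:ℝ)/(n:ℝ))) i * X i ω
            ≤ (∑ i ∈ Finset.Icc 1 n,
              stepc n1 m (s0*(-(m:ℝ)/(n:ℝ))) (s0*(((n:ℝ)-(m:ℝ))/(n:ℝ))) (s0*(-(m:ℝ)/(n:ℝ))) i * mu i)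
              - s0 * (μ2 - μ1) * (n1:ℝ) * (m:ℝ) / (n:ℝ)}
        ∪ {ω | ∑ i ∈ Finset.Icc 1 n,
          stepc n1 m (s0*(-(2*(n2:ℝ)-(m:ℝ))/(n:ℝ))) (s0*(((n1:ℝ)-(n2:ℝ)+(m:ℝ))/(n:ℝ)))
            (s0*((2*(n1:ℝ)+(m:ℝ))/(n:ℝ))) i * X i ω
            ≤ (∑ i ∈ Finset.Icc 1 n,
              stepc n1 m (s0*(-(2*(n2:ℝ)-(m:ℝ))/(n:ℝ))) (s0*(((n1:ℝ)-(n2:ℝ)+(m:ℝ))/(n:ℝ)))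
                (s0*((2*(n1:ℝ)+(m:ℝ))/(n:ℝ))) i * mu i)
              - s0 * (μ2 - μ1) * (n1:ℝ) * (2*(n2:ℝ)-(m:ℝ)) / (n:ℝ)} := by
      intro ω hω
      simp only [Set.mem_setOf_eq] at hω
      rw [hgW 0 (by omega) ω, hgW m hmn2 ω] at hω
      have habs0 := le_abs_self (W 0 ω)
      rcases abs_cases (W m ω) with ⟨he, _⟩ | ⟨he, _⟩
      · left
        simp only [Set.mem_setOf_eq]
        rw [hDX ω, hDmu]
        rw [he] at hω
        linarith
      · right
        simp only [Set.mem_setOf_eq]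
        rw [hSX ω, hSmu]
        rw [he] at hω
        linarith
    exact le_trans (measure_mono hincl) (le_trans (measure_union_le _ _) (add_le_add hE1 hE2))
  -- from exponential to δ
  have hexp0 : Real.exp (-(C * (m0:ℝ))) ≤ δ / (2 * (n2:ℝ)) := by
    have hx : (0:ℝ) < 2 * (n2:ℝ) / δ := by positivity
    have hlog : Real.log (2*(n2:ℝ)/δ) ≤ C * (m0:ℝ) := by
      have h := (div_le_iff₀ hCpos).mp hm0
      linarith
    have hle : 2*(n2:ℝ)/δ ≤ Real.exp (C*(m0:ℝ)) := (Real.log_le_iff_le_exp hx).mp hlog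
    rw [Real.exp_neg, show δ/(2*(n2:ℝ)) = (2*(n2:ℝ)/δ)⁻¹ by rw [inv_div]]
    exact inv_anti₀ hx hle
  have hperd : ∀ m : ℕ, m0 ≤ m → m ≤ n2 - 1 →
      P {ω | g 0 ω < g m ω} ≤ ENNReal.ofReal (δ / (n2:ℝ)) := by
    intro m hma hmb
    refine (hper m (le_trans hm01 hma) hmb).trans ?_
    have hmm : Real.exp (-(C*(m:ℝ))) ≤ δ/(2*(n2:ℝ)) := by
      refine le_trans ?_ hexp0
      apply Real.exp_le_exp.mpr
      have hcast : (m0:ℝ) ≤ (m:ℝ) := by exact_mod_cast hma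
      nlinarith
    rw [← ENNReal.ofReal_add (Real.exp_nonneg _) (Real.exp_nonneg _)]
    apply ENNReal.ofReal_le_ofReal
    have : δ/(2*(n2:ℝ)) + δ/(2*(n2:ℝ)) = δ/(n2:ℝ) := by
      field_simp
      ring
    linarith
  have hfirst : P {ω | ∃ m : ℕ, m0 ≤ m ∧ m ≤ n2 - 1 ∧ g 0 ω < g m ω} ≤ ENNReal.ofReal δ := by
    calc P {ω | ∃ m : ℕ, m0 ≤ m ∧ m ≤ n2 - 1 ∧ g 0 ω < g m ω}
        ≤ P (⋃ m ∈ Finset.Icc m0 (n2-1), {ω | g 0 ω < g m ω}) := by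
          apply measure_mono
          intro ω hω
          obtain ⟨m, h1, h2, h3⟩ := hω
          exact Set.mem_biUnion (Finset.mem_Icc.mpr ⟨h1, h2⟩) h3
      _ ≤ ∑ m ∈ Finset.Icc m0 (n2-1), P {ω | g 0 ω < g m ω} := measure_biUnion_finset_le _ _
      _ ≤ ∑ _m ∈ Finset.Icc m0 (n2-1), ENNReal.ofReal (δ/(n2:ℝ)) := by
          apply Finset.sum_le_sum
          intro m hm
          have h := Finset.mem_Icc.mp hm
          exact hperd m h.1 h.2
      _ = (Finset.Icc m0 (n2-1)).card • ENNReal.ofReal (δ/(n2:ℝ)) := by rw [Finset.sum_const]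
      _ ≤ (n2:ENNReal) * ENNReal.ofReal (δ/(n2:ℝ)) := by
          rw [nsmul_eq_mul]
          apply mul_le_mul_left
          have hcard : (Finset.Icc m0 (n2-1)).card ≤ n2 := by
            rw [Nat.card_Icc]; omega
          exact_mod_cast Nat.cast_le.mpr hcard
      _ = ENNReal.ofReal δ := by
          rw [show ((n2:ℕ):ENNReal) = ENNReal.ofReal ((n2:ℕ):ℝ) by simp,
            ← ENNReal.ofReal_mul (by positivity)]
          congr 1
          field_simp
  refine ⟨hfirst, ?_⟩
  intro mstar hmstar
  refine le_trans (measure_mono ?_) hfirst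
  intro ω hω
  simp only [Set.mem_setOf_eq] at hω ⊢
  obtain ⟨hle, hmax⟩ := hmstar ω
  refine ⟨mstar ω, hω, hle, ?_⟩
  rcases hmax 0 (Nat.zero_le _) with h | h
  · exfalso; omega
  · exact h
end
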